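/- arXiv:math/0405168 — 4 statements merged into one kernel-verified Lean document; each statement's English description precedes it below -/
import Mathlib

section
/- For every r ≥ 0, the identity (r/Γ(1+1/α)) · B(r+1-1/α, 1/α) = ∫₀^∞ ((1-1/α)·eˣ / (Γ(1+1/α)·(eˣ-1)^{2-1/α})) · (1 - e^{-xr}) dx holds, where B is the Beta function. -/
open MeasureTheory Real Set Filter

/-- Euler Beta function. -/
noncomputable def Beta (a b : ℝ) : ℝ := Real.Gamma a * Real.Gamma b / Real.Gamma (a + b)

lemma betaReal {a b : ℝ} (ha : 0 < a) (hb : 0 < b) :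
    ∫ x in Ioo (0:ℝ) 1, x ^ (a-1) * (1-x) ^ (b-1)
      = Real.Gamma a * Real.Gamma b / Real.Gamma (a+b) := by
  have hab : (0:ℝ) < Real.Gamma (a+b) := Real.Gamma_pos_of_pos (by linarith)
  have h := Complex.Gamma_mul_Gamma_eq_betaIntegral (s := (a:ℂ)) (t := (b:ℂ))
    (by simpa using ha) (by simpa using hb)
  have hbeta : Complex.betaIntegral (a:ℂ) (b:ℂ)
      = ((∫ x in (0:ℝ)..1, x ^ (a-1) * (1-x) ^ (b-1) : ℝ) : ℂ) := by
    rw [Complex.betaIntegral, ← intervalIntegral.integral_ofReal]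
    apply intervalIntegral.integral_congr
    intro x hx
    rw [uIcc_of_le zero_le_one, mem_Icc] at hx
    simp only [show ((a:ℂ)-1) = ((a-1:ℝ):ℂ) by push_cast; ring,
      show ((b:ℂ)-1) = ((b-1:ℝ):ℂ) by push_cast; ring,
      show ((1:ℂ) - (x:ℂ)) = ((1-x:ℝ):ℂ) by push_cast; ring,
      ← Complex.ofReal_cpow hx.1, ← Complex.ofReal_cpow (by linarith [hx.2] : (0:ℝ) ≤ 1 - x),
      Complex.ofReal_mul]
  rw [hbeta, ← Complex.ofReal_add a b, Complex.Gamma_ofReal, Complex.Gamma_ofReal,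
    Complex.Gamma_ofReal, ← Complex.ofReal_mul, ← Complex.ofReal_mul] at h
  have h2 : Real.Gamma a * Real.Gamma b
      = Real.Gamma (a+b) * ∫ x in (0:ℝ)..1, x ^ (a-1) * (1-x) ^ (b-1) := by
    exact_mod_cast h
  rw [intervalIntegral.integral_of_le zero_le_one, integral_Ioc_eq_integral_Ioo] at h2
  rw [h2, mul_div_cancel_left₀ _ hab.ne']

lemma image_exp_neg : (fun x : ℝ => rexp (-x)) '' Ioi 0 = Ioo 0 1 := by
  ext y
  simp only [mem_image, mem_Ioo, mem_Ioi]
  constructor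
  · rintro ⟨x, hx, rfl⟩
    exact ⟨exp_pos _, by rw [← Real.exp_zero]; exact Real.exp_lt_exp.2 (by linarith)⟩
  · rintro ⟨h0, h1⟩
    refine ⟨-Real.log y, by simpa using Real.log_neg h0 h1, by rw [neg_neg, Real.exp_log h0]⟩

lemma subst_lemma (β r : ℝ) (hβ1 : β < 1) (hr : 0 ≤ r) :
    ∫ u in Ioo (0:ℝ) 1, u ^ (r + 1 - β - 1) * (1-u) ^ (β-1)
      = ∫ x in Ioi (0:ℝ), rexp (-(x*r)) * (rexp x - 1) ^ (β-1) := by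
  have hinj : InjOn (fun x : ℝ => rexp (-x)) (Ioi 0) :=
    fun a _ b _ h => neg_injective (Real.exp_injective h)
  have hder : ∀ x ∈ Ioi (0:ℝ), HasDerivWithinAt (fun x : ℝ => rexp (-x)) (-rexp (-x)) (Ioi 0) x :=
    fun x _ => by simpa using (hasDerivAt_neg x).exp.hasDerivWithinAt
  rw [← image_exp_neg, integral_image_eq_integral_abs_deriv_smul measurableSet_Ioi hder hinj]
  apply setIntegral_congr_fun measurableSet_Ioi
  intro x hx
  have hx0 : (0:ℝ) < x := hx
  have hen : (0:ℝ) < 1 - rexp (-x) := by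
    have : rexp (-x) < 1 := by rw [← Real.exp_zero]; exact Real.exp_lt_exp.2 (by linarith)
    linarith
  have hfac : rexp x - 1 = rexp x * (1 - rexp (-x)) := by
    rw [mul_sub, mul_one, ← Real.exp_add]; simp
  have key : rexp (-x) * rexp (-x * (r + 1 - β - 1)) = rexp (-(x * r)) * rexp (x * (β - 1)) := by
    rw [← Real.exp_add, ← Real.exp_add]; ring_nf
  dsimp only
  rw [smul_eq_mul, abs_neg, abs_of_pos (exp_pos _), hfac,
    Real.mul_rpow (exp_pos x).le hen.le, ← Real.exp_mul, ← Real.exp_mul]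
  linear_combination (1 - rexp (-x)) ^ (β-1) * key

lemma one_sub_exp_neg_nonneg {y : ℝ} (hy : 0 ≤ y) : 0 ≤ 1 - rexp (-y) := by
  have : rexp (-y) ≤ rexp 0 := Real.exp_le_exp.2 (by linarith)
  rw [Real.exp_zero] at this; linarith

lemma one_sub_exp_neg_le_one (y : ℝ) : 1 - rexp (-y) ≤ 1 := by
  have := Real.exp_pos (-y); linarith

lemma one_sub_exp_neg_le (y : ℝ) : 1 - rexp (-y) ≤ y := by
  have := Real.add_one_le_exp (-y); linarith

lemma le_exp_sub_one (x : ℝ) : x ≤ rexp x - 1 := by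
  have := Real.add_one_le_exp x; linarith

lemma exp_sub_one_pos {x : ℝ} (hx : 0 < x) : 0 < rexp x - 1 := by
  have := le_exp_sub_one x; linarith

lemma exp_div_two_rpow (x c : ℝ) : ((rexp x)/2) ^ c = 2^(-c) * rexp (c*x) := by
  rw [Real.div_rpow (exp_pos x).le (by norm_num), ← Real.exp_mul,
    Real.rpow_neg (by norm_num), div_eq_inv_mul, mul_comm x c]

lemma rpow_int_Ioc {c : ℝ} (hc : -1 < c) :
    IntegrableOn (fun x : ℝ => x ^ c) (Ioc 0 1) := by
  have := intervalIntegral.intervalIntegrable_rpow' (a := 0) (b := 1) hc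
  rwa [intervalIntegrable_iff_integrableOn_Ioc_of_le zero_le_one] at this

lemma contOn1 {c : ℝ} (s : Set ℝ) (hs : s ⊆ Ioi 0) :
    ContinuousOn (fun x : ℝ => (rexp x - 1) ^ c) s :=
  ContinuousOn.rpow_const ((continuous_exp.sub continuous_const).continuousOn)
    (fun x hx => Or.inl (exp_sub_one_pos (hs hx)).ne')

lemma int1 {β r : ℝ} (hβ0 : 0 < β) (hβ1 : β < 1) (hr : 0 ≤ r) :
    IntegrableOn (fun x => rexp (-(x*r)) * (rexp x - 1) ^ (β-1)) (Ioi (0:ℝ)) := by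
  rw [← Ioc_union_Ioi_eq_Ioi (zero_le_one (α := ℝ))]
  refine IntegrableOn.union ?_ ?_
  · refine Integrable.mono' (g := fun x => x ^ (β-1)) (rpow_int_Ioc (by linarith)) ?_ ?_
    · exact ((continuous_exp.comp (continuous_id.mul continuous_const).neg).continuousOn.mul
        (contOn1 _ Ioc_subset_Ioi_self)).aestronglyMeasurable measurableSet_Ioc
    · filter_upwards [ae_restrict_mem measurableSet_Ioc] with x hx
      have hx0 : 0 < x := hx.1
      have hges : (0:ℝ) ≤ rexp x - 1 := by nlinarith [le_exp_sub_one x]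
      rw [Real.norm_eq_abs, abs_of_nonneg
        (mul_nonneg (exp_pos _).le (Real.rpow_nonneg hges _))]
      calc rexp (-(x*r)) * (rexp x - 1) ^ (β-1)
          ≤ 1 * x ^ (β-1) := by
            apply mul_le_mul
            · rw [← Real.exp_zero]; exact Real.exp_le_exp.2 (by nlinarith)
            · exact Real.rpow_le_rpow_of_nonpos hx0 (le_exp_sub_one x) (by linarith)
            · exact Real.rpow_nonneg hges _
            · norm_num
        _ = x ^ (β-1) := one_mul _
  · refine Integrable.mono' (g := fun x => 2^(-(β-1)) * rexp (-(1-β) * x))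
      ((exp_neg_integrableOn_Ioi 1 (by linarith)).const_mul _) ?_ ?_
    · exact ((continuous_exp.comp (continuous_id.mul continuous_const).neg).continuousOn.mul
        (contOn1 (Ioi 1) (fun x hx => mem_Ioi.2 (lt_trans one_pos (mem_Ioi.1 hx))))).aestronglyMeasurable measurableSet_Ioi
    · filter_upwards [ae_restrict_mem measurableSet_Ioi] with x hx
      have hx1 : (1:ℝ) < x := hx
      have h2 : (2:ℝ) ≤ rexp x := by
        have := Real.add_one_le_exp (1:ℝ)
        have := Real.exp_le_exp.2 hx1.le
        linarith
      have hges : (0:ℝ) ≤ rexp x - 1 := by nlinarith [le_exp_sub_one x]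
      rw [Real.norm_eq_abs, abs_of_nonneg
        (mul_nonneg (exp_pos _).le (Real.rpow_nonneg hges _))]
      calc rexp (-(x*r)) * (rexp x - 1) ^ (β-1)
          ≤ 1 * ((rexp x / 2) ^ (β-1)) := by
            apply mul_le_mul
            · rw [← Real.exp_zero]; exact Real.exp_le_exp.2 (by nlinarith)
            · exact Real.rpow_le_rpow_of_nonpos (by positivity) (by linarith) (by linarith)
            · exact Real.rpow_nonneg hges _
            · norm_num
        _ = 2^(-(β-1)) * rexp (-(1-β) * x) := by
            rw [one_mul, exp_div_two_rpow]; ring_nf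

lemma int2 {β r : ℝ} (hβ0 : 0 < β) (hβ1 : β < 1) (hr : 0 ≤ r) :
    IntegrableOn (fun x => rexp x * (rexp x - 1) ^ (β-2) * (1 - rexp (-(x*r)))) (Ioi (0:ℝ)) := by
  rw [← Ioc_union_Ioi_eq_Ioi (zero_le_one (α := ℝ))]
  refine IntegrableOn.union ?_ ?_
  · refine Integrable.mono' (g := fun x => (3*r) * x ^ (β-1))
      ((rpow_int_Ioc (by linarith)).const_mul _) ?_ ?_
    · exact ((continuous_exp.continuousOn.mul (contOn1 _ Ioc_subset_Ioi_self)).mul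
        ((continuous_const.sub (continuous_exp.comp
          (continuous_id.mul continuous_const).neg)).continuousOn)).aestronglyMeasurable
        measurableSet_Ioc
    · filter_upwards [ae_restrict_mem measurableSet_Ioc] with x hx
      have hx0 : 0 < x := hx.1
      have hxr : 0 ≤ 1 - rexp (-(x*r)) := by
        have : rexp (-(x*r)) ≤ 1 := by
          rw [← Real.exp_zero]; exact Real.exp_le_exp.2 (by nlinarith)
        linarith
      have hges : (0:ℝ) ≤ rexp x - 1 := by nlinarith [le_exp_sub_one x]
      rw [Real.norm_eq_abs, abs_of_nonneg
        (mul_nonneg (mul_nonneg (exp_pos _).le (Real.rpow_nonneg hges _)) hxr)]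
      have he : rexp x ≤ 3 := by
        have h1 := Real.exp_le_exp.2 hx.2
        have := Real.exp_one_lt_d9
        linarith
      calc rexp x * (rexp x - 1) ^ (β-2) * (1 - rexp (-(x*r)))
          ≤ 3 * x ^ (β-2) * (x*r) := by
            apply mul_le_mul
            · apply mul_le_mul he
                (Real.rpow_le_rpow_of_nonpos hx0 (le_exp_sub_one x) (by linarith))
                (by positivity) (by norm_num)
            · exact one_sub_exp_neg_le (x*r)
            · exact hxr
            · exact mul_nonneg (by norm_num) (Real.rpow_nonneg hx0.le _)
        _ = (3*r) * (x ^ (β-2) * x) := by ring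
        _ = (3*r) * x ^ (β-2+1) := by rw [Real.rpow_add_one hx0.ne']
        _ = (3*r) * x ^ (β-1) := by rw [show β-2+1 = β-1 by ring]
  · refine Integrable.mono' (g := fun x => 2^(-(β-2)) * rexp (-(1-β) * x))
      ((exp_neg_integrableOn_Ioi 1 (by linarith)).const_mul _) ?_ ?_
    · exact ((continuous_exp.continuousOn.mul
        (contOn1 (Ioi 1) (fun x hx => mem_Ioi.2 (lt_trans one_pos (mem_Ioi.1 hx))))).mul
        ((continuous_const.sub (continuous_exp.comp
          (continuous_id.mul continuous_const).neg)).continuousOn)).aestronglyMeasurable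
        measurableSet_Ioi
    · filter_upwards [ae_restrict_mem measurableSet_Ioi] with x hx
      have hx1 : (1:ℝ) < x := hx
      have h2 : (2:ℝ) ≤ rexp x := by
        have := Real.add_one_le_exp (1:ℝ)
        have := Real.exp_le_exp.2 hx1.le
        linarith
      have hxr : 0 ≤ 1 - rexp (-(x*r)) := by
        have : rexp (-(x*r)) ≤ 1 := by
          rw [← Real.exp_zero]; exact Real.exp_le_exp.2 (by nlinarith)
        linarith
      have hxr1 : 1 - rexp (-(x*r)) ≤ 1 := by
        have := (Real.exp_pos (-(x*r))); linarith
      have hges : (0:ℝ) ≤ rexp x - 1 := by nlinarith [le_exp_sub_one x]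
      rw [Real.norm_eq_abs, abs_of_nonneg
        (mul_nonneg (mul_nonneg (exp_pos _).le (Real.rpow_nonneg hges _)) hxr)]
      calc rexp x * (rexp x - 1) ^ (β-2) * (1 - rexp (-(x*r)))
          ≤ rexp x * (rexp x / 2) ^ (β-2) * 1 := by
            apply mul_le_mul
            · exact mul_le_mul_of_nonneg_left
                (Real.rpow_le_rpow_of_nonpos (by positivity) (by linarith) (by linarith))
                (exp_pos x).le
            · exact hxr1
            · exact hxr
            · positivity
        _ = 2^(-(β-2)) * rexp (-(1-β) * x) := by
            rw [mul_one, exp_div_two_rpow, ← mul_assoc, mul_comm (rexp x), mul_assoc,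
              ← Real.exp_add]
            ring_nf
lemma parts {β r : ℝ} (hβ0 : 0 < β) (hβ1 : β < 1) (hr : 0 ≤ r) :
    ∫ x in Ioi (0:ℝ), (1-β) * (rexp x * (rexp x - 1) ^ (β-2) * (1 - rexp (-(x*r))))
      = r * ∫ x in Ioi (0:ℝ), rexp (-(x*r)) * (rexp x - 1) ^ (β-1) := by
  have hges : ∀ x : ℝ, 0 < x → (0:ℝ) < rexp x - 1 := fun x hx => by
    nlinarith [le_exp_sub_one x]
  set g : ℝ → ℝ := fun x => (rexp x - 1) ^ (β-1) * (1 - rexp (-(x*r))) with hg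
  set g' : ℝ → ℝ := fun x =>
    (β-1) * (rexp x * (rexp x - 1) ^ (β-2) * (1 - rexp (-(x*r))))
      + r * (rexp (-(x*r)) * (rexp x - 1) ^ (β-1)) with hg'
  have hderiv : ∀ x ∈ Ioi (0:ℝ), HasDerivAt g (g' x) x := by
    intro x hx
    have h1 : HasDerivAt (fun x => (rexp x - 1) ^ (β-1))
        (rexp x * (β-1) * (rexp x - 1) ^ (β-1-1)) x :=
      ((Real.hasDerivAt_exp x).sub_const 1).rpow_const (Or.inl (hges x hx).ne')
    have h2 : HasDerivAt (fun x => 1 - rexp (-(x*r))) (-(rexp (-(x*r)) * -r)) x :=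
      ((hasDerivAt_mul_const r).neg.exp).const_sub 1
    refine (h1.mul h2).congr_deriv ?_
    rw [show β-1-1 = β-2 by ring]
    simp only [hg']
    ring
  have hint : IntegrableOn g' (Ioi 0) :=
    ((int2 hβ0 hβ1 hr).const_mul (β-1)).add ((int1 hβ0 hβ1 hr).const_mul r)
  have hcont : ContinuousWithinAt g (Ici 0) 0 := by
    have hg0 : g 0 = 0 := by simp [hg]
    rw [ContinuousWithinAt, hg0]
    have hb : Tendsto (fun x : ℝ => x ^ (β-1) * (x*r)) (nhdsWithin 0 (Ici 0)) (nhds 0) := by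
      have hc : Tendsto (fun x : ℝ => x ^ β * r) (nhdsWithin 0 (Ici 0)) (nhds 0) := by
        have := (Real.continuousAt_rpow_const 0 β (Or.inr hβ0.le)).tendsto
        rw [Real.zero_rpow hβ0.ne'] at this
        simpa using (this.mono_left nhdsWithin_le_nhds).mul_const r
      apply hc.congr'
      filter_upwards [self_mem_nhdsWithin] with x (hx : 0 ≤ x)
      rcases eq_or_lt_of_le hx with h|h
      · simp [← h, Real.zero_rpow hβ0.ne', Real.zero_rpow (by linarith : β-1 ≠ 0)]
      · rw [show β = β-1+1 by ring, Real.rpow_add_one h.ne']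
        ring
    apply tendsto_of_tendsto_of_tendsto_of_le_of_le' tendsto_const_nhds hb
    · filter_upwards [self_mem_nhdsWithin] with x (hx : 0 ≤ x)
      rcases eq_or_lt_of_le hx with h|h
      · simp [hg, ← h]
      · exact mul_nonneg (Real.rpow_nonneg (hges x h).le _)
          (one_sub_exp_neg_nonneg (by positivity))
    · filter_upwards [self_mem_nhdsWithin] with x (hx : 0 ≤ x)
      rcases eq_or_lt_of_le hx with h|h
      · simp [hg, ← h, Real.zero_rpow (by linarith : β-1 ≠ 0)]
      · apply mul_le_mul
        · exact Real.rpow_le_rpow_of_nonpos h (le_exp_sub_one x) (by linarith)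
        · exact one_sub_exp_neg_le (x*r)
        · exact one_sub_exp_neg_nonneg (by positivity)
        · exact Real.rpow_nonneg h.le _
  have htop : Tendsto g atTop (nhds 0) := by
    have hb : Tendsto (fun x : ℝ => (rexp x - 1) ^ (β-1)) atTop (nhds 0) := by
      have h1 : Tendsto (fun x : ℝ => rexp x - 1) atTop atTop :=
        tendsto_atTop_add_const_right _ (-1) Real.tendsto_exp_atTop
      have h2 : Tendsto (fun y : ℝ => y ^ (-(1-β))) atTop (nhds 0) :=
        tendsto_rpow_neg_atTop (by linarith)
      rw [show β-1 = -(1-β) by ring]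
      exact h2.comp h1
    apply tendsto_of_tendsto_of_tendsto_of_le_of_le' tendsto_const_nhds hb
    · filter_upwards [Ioi_mem_atTop (0:ℝ)] with x (hx : 0 < x)
      exact mul_nonneg (Real.rpow_nonneg (hges x hx).le _)
        (one_sub_exp_neg_nonneg (by positivity))
    · filter_upwards [Ioi_mem_atTop (0:ℝ)] with x (hx : 0 < x)
      calc g x ≤ (rexp x - 1) ^ (β-1) * 1 :=
            mul_le_mul_of_nonneg_left (one_sub_exp_neg_le_one _)
              (Real.rpow_nonneg (hges x hx).le _)
        _ = (rexp x - 1) ^ (β-1) := mul_one _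
  have key := integral_Ioi_of_hasDerivAt_of_tendsto hcont hderiv hint htop
  have hg0 : g 0 = 0 := by simp [hg]
  rw [hg0, sub_zero] at key
  rw [hg'] at key
  rw [integral_add ((int2 hβ0 hβ1 hr).const_mul (β-1)) ((int1 hβ0 hβ1 hr).const_mul r),
    integral_const_mul, integral_const_mul] at key
  rw [integral_const_mul]
  linarith

/-- The Lévy–Khintchine form of the Laplace exponent `Φ(r)`:
for every `r ≥ 0`,
`(r/Γ(1+1/α)) B(r+1-1/α, 1/α)
  = ∫₀^∞ ((1-1/α) eˣ / (Γ(1+1/α)(eˣ-1)^{2-1/α})) (1-e^{-xr}) dx`. -/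
theorem stmt0 (α : ℝ) (hα : 1 < α ∧ α < 2) (r : ℝ) (hr : 0 ≤ r) :
    (r / Real.Gamma (1 + 1/α)) * Beta (r + 1 - 1/α) (1/α)
      = ∫ x in Ioi (0:ℝ),
          ((1 - 1/α) * Real.exp x /
            (Real.Gamma (1 + 1/α) * (Real.exp x - 1) ^ (2 - 1/α)))
          * (1 - Real.exp (-x * r)) := by
  obtain ⟨hα1, hα2⟩ := hα
  have hα0 : (0:ℝ) < α := by linarith
  set β := 1/α with hβ
  have hβ0 : 0 < β := by positivity
  have hβ1 : β < 1 := by rw [hβ, div_lt_one hα0]; linarith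
  have step1 : (∫ x in Ioi (0:ℝ),
        ((1 - β) * rexp x / (Real.Gamma (1 + β) * (rexp x - 1) ^ (2 - β)))
          * (1 - rexp (-x * r)))
      = (1/Real.Gamma (1+β)) * ∫ x in Ioi (0:ℝ),
          (1-β) * (rexp x * (rexp x - 1) ^ (β-2) * (1 - rexp (-(x*r)))) := by
    rw [← integral_const_mul]
    apply setIntegral_congr_fun measurableSet_Ioi
    intro x hx
    have h1 : (0:ℝ) < rexp x - 1 := by nlinarith [le_exp_sub_one x, mem_Ioi.1 hx]
    have hGp : (0:ℝ) < Real.Gamma (1+β) := Real.Gamma_pos_of_pos (by linarith)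
    have h2 : (0:ℝ) < (rexp x - 1) ^ (2-β) := Real.rpow_pos_of_pos h1 _
    dsimp only
    rw [show -x*r = -(x*r) by ring, show β-2 = -(2-β) by ring, Real.rpow_neg h1.le]
    field_simp
  rw [step1, parts hβ0 hβ1 hr, ← subst_lemma β r hβ1 hr,
    betaReal (by linarith : (0:ℝ) < r + 1 - β) hβ0, Beta]
  ring
end

section
/- For α ∈ (1,2), n ≥ 2, and a partition π_n of [n] = {1,…,n} with k ≥ 2 blocks of sizes n₁,…,n_k, the quantity ρ₋(n)({π_n}) = (D_α Γ(k-α))/(α^k Γ(n-1/α)) · ∏_{i=1}^k [1-1/α]_{n_i-1} satisfies: summing ρ₋(n)({π_n}) over all non-trivial partitions π_n of [n] gives 1. Here [x]_m = Γ(x+m)/Γ(x) and D_α = α²Γ(2-1/α)/Γ(2-α). -/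
open Real Finset

noncomputable def risingFac (x : ℝ) (m : ℕ) : ℝ := Real.Gamma (x + m) / Real.Gamma x

namespace Stmt9

lemma risingFac_zero {x : ℝ} (hx : Real.Gamma x ≠ 0) : risingFac x 0 = 1 := by
  simp [risingFac, div_self hx]

lemma risingFac_succ (x : ℝ) (m : ℕ) (h : x + m ≠ 0) :
    risingFac x (m + 1) = risingFac x m * (x + m) := by
  unfold risingFac
  have : x + ((m : ℝ) + 1) = (x + m) + 1 := by ring
  rw [Nat.cast_add, Nat.cast_one, this, Real.Gamma_add_one h]
  ring

variable {γ : Type*} [DecidableEq γ]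

/-- weight of a partition -/
noncomputable def w (A : ℝ) {s : Finset γ} (P : Finpartition s) : ℝ :=
  Real.Gamma (P.parts.card - A) / A ^ P.parts.card
    * ∏ b ∈ P.parts, risingFac (1 - 1/A) (b.card - 1)

section ins

variable {s : Finset γ} {a : γ}

/-- insert `a` into block `c` (or create new block if `c = ∅`) -/
def insP (ha : a ∉ s) (P : Finpartition s) (c : Finset γ)
    (hc : c ∈ insert ∅ P.parts) : Finpartition (insert a s) where
  parts := insert (insert a c) (P.parts.erase c)
  supIndep := by
    rw [Finset.supIndep_iff_pairwiseDisjoint, Finset.coe_insert]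
    refine Set.PairwiseDisjoint.insert
      (P.disjoint.subset (Finset.coe_subset.2 (Finset.erase_subset _ _))) ?_
    intro b hb hne
    rw [Finset.mem_coe, Finset.mem_erase] at hb
    have hbs : b ⊆ s := P.le hb.2
    have hab : a ∉ b := fun h => ha (hbs h)
    show Disjoint (insert a c) b
    rw [Finset.disjoint_insert_left]
    refine ⟨hab, ?_⟩
    rcases Finset.mem_insert.1 hc with h | h
    · subst h; simp
    · exact P.disjoint h hb.2 (fun hcb => hb.1 hcb.symm)
  sup_parts := by
    have hP : (∅ : Finset γ) ∉ P.parts := by simpa using P.bot_notMem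
    rw [Finset.sup_insert]
    rcases Finset.mem_insert.1 hc with h | h
    · subst h
      rw [Finset.erase_eq_of_notMem hP, P.sup_parts]
      simp only [id_eq, Finset.sup_eq_union]
      rw [Finset.insert_union, Finset.empty_union]
    · have h2 := P.sup_parts
      rw [← Finset.insert_erase h, Finset.sup_insert] at h2
      simp only [id_eq, Finset.sup_eq_union] at h2 ⊢
      rw [Finset.insert_union, h2]
  bot_notMem := by
    rw [Finset.bot_eq_empty, Finset.mem_insert]
    rintro (h | h)
    · exact (Finset.insert_ne_empty a c) h.symm
    · exact P.bot_notMem (Finset.bot_eq_empty (α := γ) ▸ Finset.mem_of_mem_erase h)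

lemma insP_parts (ha : a ∉ s) (P : Finpartition s) (c : Finset γ)
    (hc : c ∈ insert ∅ P.parts) :
    (insP ha P c hc).parts = insert (insert a c) (P.parts.erase c) := rfl


lemma insertac_not_mem (ha : a ∉ s) (P : Finpartition s) (c : Finset γ) :
    insert a c ∉ P.parts :=
  fun h => ha (P.le h (Finset.mem_insert_self a c))

lemma insP_card (ha : a ∉ s) (P : Finpartition s) (c : Finset γ)
    (hc : c ∈ insert ∅ P.parts) :
    (insP ha P c hc).parts.card = (P.parts.erase c).card + 1 := by
  rw [insP_parts, Finset.card_insert_of_notMem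
    (fun h => insertac_not_mem ha P c (Finset.mem_of_mem_erase h))]

/-- remove `a` from a partition of `insert a s` -/
def delP (ha : a ∉ s) (Q : Finpartition (insert a s)) : Finpartition s :=
  Finpartition.ofErase (insert ((Q.part a).erase a) (Q.parts.erase (Q.part a)))
    (by
      rw [Finset.supIndep_iff_pairwiseDisjoint, Finset.coe_insert]
      refine Set.PairwiseDisjoint.insert
        (Q.disjoint.subset (Finset.coe_subset.2 (Finset.erase_subset _ _))) ?_
      intro b hb hne
      rw [Finset.mem_coe, Finset.mem_erase] at hb
      have hdisj : Disjoint (Q.part a) b :=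
        Q.disjoint (Q.part_mem.2 (Finset.mem_insert_self a s)) hb.2 (fun h => hb.1 h.symm)
      exact Finset.disjoint_of_subset_left (Finset.erase_subset _ _) hdisj)
    (by
      have hb : Q.part a ∈ Q.parts := Q.part_mem.2 (Finset.mem_insert_self a s)
      have h2 := Q.sup_parts
      rw [← Finset.insert_erase hb, Finset.sup_insert] at h2
      have ha2 : a ∉ (Q.parts.erase (Q.part a)).sup id := by
        intro h
        rw [Finset.mem_sup] at h
        obtain ⟨b, hbmem, hab⟩ := h
        exact (Finset.mem_erase.1 hbmem).1
          (Q.eq_of_mem_parts (Finset.mem_of_mem_erase hbmem) hb hab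
            (Q.mem_part (Finset.mem_insert_self a s)))
      rw [Finset.sup_insert]
      simp only [id_eq, Finset.sup_eq_union] at h2 ⊢
      rw [← Finset.erase_eq_of_notMem ha2, ← Finset.erase_union_distrib, h2,
        Finset.erase_insert ha])

lemma delP_parts (ha : a ∉ s) (Q : Finpartition (insert a s)) :
    (delP ha Q).parts
      = (insert ((Q.part a).erase a) (Q.parts.erase (Q.part a))).erase ∅ := rfl

lemma erase_part_not_mem (ha : a ∉ s) (Q : Finpartition (insert a s)) :
    (Q.part a).erase a ∉ Q.parts.erase (Q.part a) := by
  intro h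
  have hmem : (Q.part a).erase a ∈ Q.parts := Finset.mem_of_mem_erase h
  have hne : (Q.part a).erase a ≠ Q.part a := (Finset.mem_erase.1 h).1
  have hdisj : Disjoint ((Q.part a).erase a) (Q.part a) :=
    Q.disjoint hmem (Q.part_mem.2 (Finset.mem_insert_self a s)) hne
  have : (Q.part a).erase a = ⊥ := hdisj.eq_bot_of_le (Finset.erase_subset _ _)
  exact Q.bot_notMem (this ▸ hmem)

lemma erase_part_mem (ha : a ∉ s) (Q : Finpartition (insert a s)) :
    (Q.part a).erase a ∈ insert ∅ (delP ha Q).parts := by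
  by_cases h : (Q.part a).erase a = ∅
  · rw [h]; exact Finset.mem_insert_self _ _
  · refine Finset.mem_insert_of_mem ?_
    rw [delP_parts, Finset.mem_erase]
    exact ⟨h, Finset.mem_insert_self _ _⟩

lemma delP_insP (ha : a ∉ s) (P : Finpartition s) (c : Finset γ)
    (hc : c ∈ insert ∅ P.parts) :
    delP ha (insP ha P c hc) = P ∧ ((insP ha P c hc).part a).erase a = c := by
  have hac : a ∉ c := by
    rcases Finset.mem_insert.1 hc with h | h
    · subst h; exact Finset.notMem_empty a
    · exact fun h2 => ha (P.le h h2)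
  have hpart : (insP ha P c hc).part a = insert a c :=
    Finpartition.part_eq_of_mem _ (Finset.mem_insert_self _ _) (Finset.mem_insert_self a c)
  have hc2 : ((insP ha P c hc).part a).erase a = c := by
    rw [hpart, Finset.erase_insert hac]
  refine ⟨?_, hc2⟩
  apply Finpartition.ext
  rw [delP_parts, hc2, hpart, insP_parts,
    Finset.erase_insert (fun h => insertac_not_mem ha P c (Finset.mem_of_mem_erase h))]
  have hP : (∅ : Finset γ) ∉ P.parts := by simpa using P.bot_notMem
  rcases Finset.mem_insert.1 hc with h | h
  · subst h
    rw [Finset.erase_eq_of_notMem hP, Finset.erase_insert hP]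
  · rw [Finset.insert_erase h, Finset.erase_eq_of_notMem hP]

lemma insP_delP (ha : a ∉ s) (Q : Finpartition (insert a s)) :
    insP ha (delP ha Q) ((Q.part a).erase a) (erase_part_mem ha Q) = Q := by
  have hb : Q.part a ∈ Q.parts := Q.part_mem.2 (Finset.mem_insert_self a s)
  have hab : a ∈ Q.part a := Q.mem_part (Finset.mem_insert_self a s)
  have hE : (∅ : Finset γ) ∉ Q.parts.erase (Q.part a) :=
    fun h => Q.bot_notMem (Finset.mem_of_mem_erase h)
  have hcE := erase_part_not_mem ha Q
  apply Finpartition.ext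
  rw [insP_parts, Finset.insert_erase hab]
  have hrw : (delP ha Q).parts.erase ((Q.part a).erase a)
      = Q.parts.erase (Q.part a) := by
    rw [delP_parts]
    by_cases h : (Q.part a).erase a = ∅
    · rw [h, Finset.erase_insert hE, Finset.erase_eq_of_notMem hE]
    · have h0 : (∅ : Finset γ) ∉ insert ((Q.part a).erase a) (Q.parts.erase (Q.part a)) := by
        rw [Finset.mem_insert]
        rintro (h2 | h2)
        · exact h h2.symm
        · exact hE h2
      rw [Finset.erase_eq_of_notMem h0, Finset.erase_insert hcE]
  rw [hrw, Finset.insert_erase hb]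


/-- total version of insP -/
noncomputable def insF (ha : a ∉ s) (p : (_ : Finpartition s) × Finset γ) :
    Finpartition (insert a s) :=
  if h : p.2 ∈ insert ∅ p.1.parts then insP ha p.1 p.2 h
  else Finpartition.indiscrete (by simp)

lemma insF_delP (ha : a ∉ s) (Q : Finpartition (insert a s)) :
    insF ha ⟨delP ha Q, (Q.part a).erase a⟩ = Q := by
  rw [insF, dif_pos (erase_part_mem ha Q)]
  exact insP_delP ha Q

lemma key (A : ℝ) (hA1 : 1 < A) (hA2 : A < 2) (hs : s.Nonempty) (ha : a ∉ s) :
    ∑ Q : Finpartition (insert a s), w A Q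
      = ((s.card : ℝ) - 1) * ∑ P : Finpartition s, w A P := by
  have hA0 : (0:ℝ) < A := by linarith
  have h1A : 0 < 1 - 1/A := by
    have : 1/A < 1 := by rw [div_lt_one hA0]; linarith
    linarith
  have hGx : Real.Gamma (1 - 1/A) ≠ 0 := ne_of_gt (Real.Gamma_pos_of_pos h1A)
  have hbij : ∑ Q : Finpartition (insert a s), w A Q
      = ∑ p ∈ (univ : Finset (Finpartition s)).sigma (fun P => insert ∅ P.parts),
          w A (insF ha p) := by
    refine Finset.sum_nbij'
      (fun Q => (⟨delP ha Q, (Q.part a).erase a⟩ : (_ : Finpartition s) × Finset γ))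
      (insF ha) ?_ ?_ ?_ ?_ ?_
    · intro Q _
      exact Finset.mem_sigma.2 ⟨Finset.mem_univ _, erase_part_mem ha Q⟩
    · intro p _
      exact Finset.mem_univ _
    · intro Q _
      exact insF_delP ha Q
    · rintro ⟨P, c⟩ hp
      have hc : c ∈ insert ∅ P.parts := (Finset.mem_sigma.1 hp).2
      rw [insF, dif_pos hc]
      obtain ⟨h1, h2⟩ := delP_insP ha P c hc
      exact Sigma.ext h1 (heq_of_eq h2)
    · intro Q _
      rw [insF_delP ha Q]
  rw [hbij, Finset.sum_sigma, Finset.mul_sum]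
  refine Finset.sum_congr rfl ?_
  intro P _
  have hP0 : (∅ : Finset γ) ∉ P.parts := by simpa using P.bot_notMem
  have hk : 1 ≤ P.parts.card :=
    Finset.card_pos.2 (P.parts_nonempty (by simpa using hs.ne_empty))
  have hkA : (P.parts.card : ℝ) - A ≠ 0 := by
    rcases Nat.lt_or_ge P.parts.card 2 with h | h
    · have hk1 : P.parts.card = 1 := by omega
      rw [hk1]
      norm_num
      linarith
    · have : (2:ℝ) ≤ P.parts.card := by exact_mod_cast h
      have : A < P.parts.card := by linarith
      linarith
  rw [Finset.sum_insert hP0]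
  have hterm0 : w A (insF ha ⟨P, (∅ : Finset γ)⟩)
      = ((P.parts.card : ℝ) - A)/A * w A P := by
    rw [insF, dif_pos (Finset.mem_insert_self _ _)]
    have hnm : insert a (∅:Finset γ) ∉ P.parts := insertac_not_mem ha P ∅
    unfold w
    rw [insP_parts, Finset.erase_eq_of_notMem hP0,
      Finset.card_insert_of_notMem hnm, Finset.prod_insert hnm]
    have hcard1 : (insert a (∅:Finset γ)).card - 1 = 0 := by simp
    rw [hcard1, risingFac_zero hGx]
    have hG : Real.Gamma ((↑(P.parts.card + 1) : ℝ) - A)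
        = ((P.parts.card : ℝ) - A) * Real.Gamma ((P.parts.card : ℝ) - A) := by
      push_cast
      rw [show ((P.parts.card:ℝ)+1) - A = ((P.parts.card:ℝ) - A) + 1 by ring,
        Real.Gamma_add_one hkA]
    rw [hG]
    ring
  have hterm : ∀ c ∈ P.parts,
      w A (insF ha ⟨P, c⟩) = ((c.card : ℝ) - 1/A) * w A P := by
    intro c hc
    rw [insF, dif_pos (Finset.mem_insert_of_mem hc)]
    have hnm : insert a c ∉ P.parts.erase c :=
      fun h => insertac_not_mem ha P c (Finset.mem_of_mem_erase h)
    have hac : a ∉ c := fun h2 => ha (P.le hc h2)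
    obtain ⟨m, hm⟩ : ∃ m, c.card = m + 1 :=
      ⟨c.card - 1, by have := Finset.card_pos.2 (P.nonempty_of_mem_parts hc); omega⟩
    unfold w
    rw [insP_parts, Finset.card_insert_of_notMem hnm, Finset.card_erase_of_mem hc,
      Finset.prod_insert hnm]
    have hk1 : P.parts.card - 1 + 1 = P.parts.card := by omega
    rw [hk1, Finset.card_insert_of_notMem hac, hm]
    simp only [Nat.add_sub_cancel]
    have hxm : (1 - 1/A) + (m:ℝ) ≠ 0 := by
      have : (0:ℝ) ≤ m := Nat.cast_nonneg m
      positivity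
    rw [risingFac_succ _ m hxm]
    have hre : risingFac (1 - 1/A) m * ((1 - 1/A) + m)
          * ∏ b ∈ P.parts.erase c, risingFac (1 - 1/A) (b.card - 1)
        = ((1 - 1/A) + m) * ∏ b ∈ P.parts, risingFac (1 - 1/A) (b.card - 1) := by
      rw [← Finset.mul_prod_erase P.parts _ hc, hm]
      simp only [Nat.add_sub_cancel]
      ring
    rw [hre]
    push_cast
    ring
  rw [Finset.sum_congr rfl hterm, ← Finset.sum_mul, Finset.sum_sub_distrib,
    Finset.sum_const, ← Nat.cast_sum, P.sum_card_parts, hterm0]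
  have hAne : A ≠ 0 := ne_of_gt hA0
  field_simp
  rw [nsmul_eq_mul]
  field_simp
  ring


end ins

lemma parts_of_singleton (x : γ) (P : Finpartition ({x} : Finset γ)) :
    P.parts = {({x} : Finset γ)} := by
  have hne : P.parts.Nonempty := P.parts_nonempty (by simp)
  rw [Finset.eq_singleton_iff_nonempty_unique_mem]
  refine ⟨hne, ?_⟩
  intro b hb
  rcases Finset.subset_singleton_iff.1 (P.le hb) with h | h
  · exact absurd (h ▸ hb) (by simpa using P.bot_notMem)
  · exact h

lemma sum_w_singleton (A : ℝ) (hA1 : 1 < A) (x : γ) :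
    ∑ P : Finpartition ({x} : Finset γ), w A P = Real.Gamma (1 - A) / A := by
  have hA0 : (0:ℝ) < A := by linarith
  have h1A : 0 < 1 - 1/A := by
    have : 1/A < 1 := by rw [div_lt_one hA0]; linarith
    linarith
  have hGx : Real.Gamma (1 - 1/A) ≠ 0 := ne_of_gt (Real.Gamma_pos_of_pos h1A)
  have hne : ({x} : Finset γ) ≠ ⊥ := by simp
  have huniv : (univ : Finset (Finpartition ({x} : Finset γ)))
      = {Finpartition.indiscrete hne} := by
    apply (Finset.eq_singleton_iff_unique_mem).2
    refine ⟨Finset.mem_univ _, ?_⟩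
    intro P _
    apply Finpartition.ext
    rw [parts_of_singleton x P]
    rfl
  rw [huniv, Finset.sum_singleton]
  unfold w
  have hparts : (Finpartition.indiscrete hne).parts = {({x} : Finset γ)} := rfl
  rw [hparts]
  simp only [Finset.card_singleton, Finset.prod_singleton, Nat.sub_self, pow_one, Nat.cast_one]
  rw [risingFac_zero hGx, mul_one]

lemma sum_w_zero (A : ℝ) (hA1 : 1 < A) (hA2 : A < 2) :
    ∀ n : ℕ, ∀ s : Finset γ, s.card = n + 2 → ∑ P : Finpartition s, w A P = 0 := by
  intro n
  induction n with
  | zero =>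
    intro s hs
    obtain ⟨a, ha⟩ : s.Nonempty := Finset.card_pos.1 (by omega)
    have hae : a ∉ s.erase a := Finset.notMem_erase a s
    have hne : (s.erase a).Nonempty :=
      Finset.card_pos.1 (by rw [Finset.card_erase_of_mem ha]; omega)
    have h := key A hA1 hA2 hne hae
    rw [Finset.insert_erase ha] at h
    rw [h, Finset.card_erase_of_mem ha, hs]
    norm_num
  | succ n ih =>
    intro s hs
    obtain ⟨a, ha⟩ : s.Nonempty := Finset.card_pos.1 (by omega)
    have hae : a ∉ s.erase a := Finset.notMem_erase a s
    have hne : (s.erase a).Nonempty :=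
      Finset.card_pos.1 (by rw [Finset.card_erase_of_mem ha]; omega)
    have h := key A hA1 hA2 hne hae
    rw [Finset.insert_erase ha] at h
    rw [h, ih (s.erase a) (by rw [Finset.card_erase_of_mem ha]; omega)]
    ring


end Stmt9


/-- The weights
`ρ₋(n)({π}) = D_α Γ(k-α)/(α^k Γ(n-1/α)) ∏_{i=1}^k [1-1/α]_{n_i-1}`,
where `k` is the number of blocks of the partition `π` of `[n]` and
`n₁,…,n_k` are its block sizes, sum to `1` over the non-trivial partitions
of `[n]`, for `α ∈ (1,2)` and `n ≥ 2`. Here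
`D_α = α²Γ(2-1/α)/Γ(2-α)`. -/
theorem stmt9 (α : ℝ) (hα : 1 < α ∧ α < 2) (n : ℕ) (hn : 2 ≤ n) :
    ∑ P ∈ Finset.univ.filter
        (fun P : Finpartition (Finset.univ : Finset (Fin n)) => 2 ≤ P.parts.card),
      (α ^ 2 * Real.Gamma (2 - 1/α) / Real.Gamma (2 - α))
        * Real.Gamma (P.parts.card - α)
        / (α ^ P.parts.card * Real.Gamma (n - 1/α))
        * ∏ b ∈ P.parts, risingFac (1 - 1/α) (b.card - 1)
      = 1 := by
  obtain ⟨hA1, hA2⟩ := hα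
  have hA0 : (0:ℝ) < α := by linarith
  have hAne : α ≠ 0 := ne_of_gt hA0
  have h1A : 0 < 1 - 1/α := by
    have : 1/α < 1 := by rw [div_lt_one hA0]; linarith
    linarith
  have hG1 : Real.Gamma (1 - 1/α) ≠ 0 := ne_of_gt (Real.Gamma_pos_of_pos h1A)
  have hn1 : (2:ℝ) ≤ (n:ℝ) := by exact_mod_cast hn
  have hGn : Real.Gamma ((n:ℝ) - 1/α) ≠ 0 := by
    refine ne_of_gt (Real.Gamma_pos_of_pos ?_)
    have : 1/α < 1 := by rw [div_lt_one hA0]; linarith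
    linarith
  have h1a : (1:ℝ) - α ≠ 0 := ne_of_lt (by linarith)
  have hG1a : Real.Gamma (1 - α) ≠ 0 := by
    apply Real.Gamma_ne_zero
    intro m
    rcases Nat.eq_zero_or_pos m with hm | hm
    · subst hm; simpa using h1a
    · have h1 : (1:ℝ) ≤ m := by exact_mod_cast hm
      intro h
      have : α = 1 + m := by push_cast at h; linarith
      linarith
  have hne : (Finset.univ : Finset (Fin n)) ≠ ⊥ := by
    have hn0 : (0:ℕ) < n := by omega
    haveI : Nonempty (Fin n) := ⟨⟨0, hn0⟩⟩
    simpa using Finset.univ_nonempty.ne_empty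
  set I : Finpartition (Finset.univ : Finset (Fin n)) := Finpartition.indiscrete hne with hI
  set g : Finpartition (Finset.univ : Finset (Fin n)) → ℝ := fun P =>
      (α ^ 2 * Real.Gamma (2 - 1/α) / Real.Gamma (2 - α))
        * Real.Gamma (P.parts.card - α)
        / (α ^ P.parts.card * Real.Gamma (n - 1/α))
        * ∏ b ∈ P.parts, risingFac (1 - 1/α) (b.card - 1) with hg
  have hcard : (Finset.univ : Finset (Fin n)).card = n := by simp
  have htot : ∑ P : Finpartition (Finset.univ : Finset (Fin n)), g P = 0 := by
    have hz := Stmt9.sum_w_zero α hA1 hA2 (n - 2) Finset.univ (by rw [hcard]; omega)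
    have hfac : ∀ P : Finpartition (Finset.univ : Finset (Fin n)),
        g P = (α ^ 2 * Real.Gamma (2 - 1/α) / Real.Gamma (2 - α)
          / Real.Gamma ((n:ℝ) - 1/α)) * Stmt9.w α P := by
      intro P
      rw [hg]
      unfold Stmt9.w
      ring
    rw [Finset.sum_congr rfl (fun P _ => hfac P), ← Finset.mul_sum, hz, mul_zero]
  have hfilter : Finset.univ.filter
      (fun P : Finpartition (Finset.univ : Finset (Fin n)) => ¬ 2 ≤ P.parts.card)
      = {I} := by
    apply Finset.eq_singleton_iff_unique_mem.2
    constructor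
    · rw [Finset.mem_filter]
      refine ⟨Finset.mem_univ _, ?_⟩
      have : I.parts = {(Finset.univ : Finset (Fin n))} := rfl
      rw [this, Finset.card_singleton]
      omega
    · intro P hP
      rw [Finset.mem_filter] at hP
      have h1 : 1 ≤ P.parts.card := Finset.card_pos.2 (P.parts_nonempty hne)
      have hc1 : P.parts.card = 1 := by omega
      obtain ⟨t, ht⟩ := Finset.card_eq_one.1 hc1
      have hts : t = (Finset.univ : Finset (Fin n)) := by
        have h2 := P.sup_parts
        rw [ht, Finset.sup_singleton] at h2
        exact h2
      apply Finpartition.ext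
      rw [ht, hts]
      rfl
  have hsplit := Finset.sum_filter_add_sum_filter_not
    (Finset.univ : Finset (Finpartition (Finset.univ : Finset (Fin n))))
    (fun P => 2 ≤ P.parts.card) g
  rw [htot, hfilter, Finset.sum_singleton] at hsplit
  have hgI : g I = -1 := by
    have hIparts : I.parts = {(Finset.univ : Finset (Fin n))} := rfl
    rw [hg]
    simp only [hIparts, Finset.card_singleton, Finset.prod_singleton, hcard,
      Nat.cast_one, pow_one]
    unfold risingFac
    have hcast : (1 - 1/α) + ((n - 1 : ℕ) : ℝ) = (n:ℝ) - 1/α := by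
      rw [Nat.cast_sub (by omega : 1 ≤ n)]
      push_cast
      ring
    rw [hcast]
    have hG2a : Real.Gamma (2 - α) = (1 - α) * Real.Gamma (1 - α) := by
      rw [show (2:ℝ) - α = (1 - α) + 1 by ring, Real.Gamma_add_one h1a]
    have hG2A : Real.Gamma (2 - 1/α) = (1 - 1/α) * Real.Gamma (1 - 1/α) := by
      rw [show (2:ℝ) - 1/α = (1 - 1/α) + 1 by ring, Real.Gamma_add_one (ne_of_gt h1A)]
    rw [hG2a, hG2A]
    set G1 := Real.Gamma (1 - 1/α)
    set Ga := Real.Gamma (1 - α)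
    set Gn := Real.Gamma ((n:ℝ) - 1/α)
    field_simp
    ring
  linarith [hsplit, hgI]
end

section
/- For α ∈ (1,2), the sum over all plane trees T with n leaves and no vertex of out-degree 1 of the product over internal vertices v of |(α-1)(α-2)⋯(α-c_v(T)+1)|/c_v(T)! equals (α-1)(2α-1)⋯((n-1)α-1)/n! = α^{n-1}[1-1/α]_{n-1}/n!, where c_v(T) is the number of children of v. -/
/-- Finite rooted plane trees. -/
inductive PTree : Type
  | node : List PTree → PTree

/-- Number of leaves. -/
def PTree.leaves : PTree → ℕ
  | .node cs => max 1 ((cs.attach.map (fun c => PTree.leaves c.1)).sum)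
decreasing_by have := List.sizeOf_lt_of_mem c.2; simp; omega

/-- `true` iff no vertex has out-degree 1. -/
def PTree.good : PTree → Bool
  | .node cs => cs.length ≠ 1 && cs.attach.all (fun c => PTree.good c.1)
decreasing_by have := List.sizeOf_lt_of_mem c.2; simp; omega

/-- Weight `∏_v |(α-1)(α-2)⋯(α-c_v+1)|/c_v!` over internal vertices `v`
(the factor of a vertex with `c` children is `(∏_{1≤i≤c-1}|α-i|)/c!`,
which equals `1` for leaves). -/
noncomputable def PTree.w (α : ℝ) : PTree → ℝ
  | .node cs =>
      (∏ i ∈ Finset.range cs.length \ {0}, |α - (i:ℝ)|) / (Nat.factorial cs.length)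
        * ((cs.attach.map (fun d => PTree.w α d.1)).prod)
decreasing_by have := List.sizeOf_lt_of_mem d.2; simp; omega

/-- Root children. -/
def PTree.rootChildren : PTree → List PTree
  | .node cs => cs

open Finset
open scoped ENNReal

noncomputable def fR (α : ℝ) (n : ℕ) : ℝ :=
  if n = 0 then 0 else (∏ i ∈ Finset.Icc 1 (n-1), ((i:ℝ)*α - 1)) / (Nat.factorial n)

noncomputable def cwt (α : ℝ) (k : ℕ) : ℝ :=
  (∏ i ∈ Finset.range k \ {0}, |α - (i:ℝ)|) / (Nat.factorial k)

noncomputable def dC (α : ℝ) (k : ℕ) : ℝ := if k = 1 then -1 else cwt α k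

noncomputable def Wr (α : ℝ) : ℕ → ℕ → ℝ
  | 0, n => if n = 0 then 1 else 0
  | (k+1), n => ∑ p ∈ Finset.HasAntidiagonal.antidiagonal n, fR α p.1 * Wr α k p.2

lemma fR_zero (α : ℝ) : fR α 0 = 0 := rfl

lemma fR_one (α : ℝ) : fR α 1 = 1 := by simp [fR]

lemma fR_nonneg {α : ℝ} (hα : 1 < α) (n : ℕ) : 0 ≤ fR α n := by
  unfold fR
  split
  · exact le_refl 0
  · apply div_nonneg _ (by positivity)
    apply Finset.prod_nonneg
    intro i hi
    have hi1 : 1 ≤ i := (Finset.mem_Icc.mp hi).1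
    have : (1:ℝ) ≤ i := by exact_mod_cast hi1
    nlinarith

lemma fR_rec' {α : ℝ} (m : ℕ) :
    ((m:ℝ)+1) * fR α (m+1) = (α*m - 1) * fR α m + (if m = 0 then 1 else 0) := by
  rcases Nat.eq_zero_or_pos m with rfl | hm
  · simp [fR_one, fR_zero]
  · obtain ⟨j, rfl⟩ : ∃ j, m = j + 1 := ⟨m-1, (Nat.succ_pred_eq_of_pos hm).symm⟩
    simp only [Nat.add_eq_zero, and_false, one_ne_zero, if_false, add_zero, fR,
      Nat.add_sub_cancel]
    rw [Finset.prod_Icc_succ_top (by omega), Nat.factorial_succ (j+1)]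
    have h1 : (Nat.factorial (j+1) : ℝ) ≠ 0 := Nat.cast_ne_zero.mpr (Nat.factorial_ne_zero _)
    have h2 : ((j:ℝ)+1+1) ≠ 0 := by positivity
    push_cast
    field_simp
    rw [show ∏ x ∈ Icc 1 j, (α * (x:ℝ) - 1) = ∏ x ∈ Icc 1 j, ((x:ℝ) * α - 1) from
      Finset.prod_congr rfl (fun x _ => by ring)]
    ring

lemma cwt_nonneg (α : ℝ) (k : ℕ) : 0 ≤ cwt α k := by
  apply div_nonneg _ (by positivity)
  exact Finset.prod_nonneg fun i _ => abs_nonneg _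

lemma Wr_nonneg {α : ℝ} (hα : 1 < α) (k n : ℕ) : 0 ≤ Wr α k n := by
  induction k generalizing n with
  | zero => rw [Wr]; split <;> norm_num
  | succ k ih =>
    rw [Wr]
    exact Finset.sum_nonneg fun p _ => mul_nonneg (fR_nonneg hα _) (ih _)

lemma Wr_eq_zero_of_lt {α : ℝ} {k n : ℕ} (h : n < k) : Wr α k n = 0 := by
  induction k generalizing n with
  | zero => omega
  | succ k ih =>
    rw [Wr]
    apply Finset.sum_eq_zero
    intro p hp
    have hp' := Finset.HasAntidiagonal.mem_antidiagonal.mp hp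
    rcases Nat.eq_zero_or_pos p.1 with h1 | h1
    · rw [h1, fR_zero, zero_mul]
    · rw [ih (by omega), mul_zero]

lemma Wr_one {α : ℝ} (n : ℕ) : Wr α 1 n = fR α n := by
  rw [Wr]
  rw [Finset.sum_eq_single_of_mem (n, 0) (Finset.HasAntidiagonal.mem_antidiagonal.mpr (by simp))]
  · simp [Wr]
  · intro p hp hne
    have hp' := Finset.HasAntidiagonal.mem_antidiagonal.mp hp
    rcases Nat.eq_zero_or_pos p.2 with h2 | h2
    · exfalso; apply hne; ext <;> omega
    · rw [Wr]; simp only [if_neg (by omega : ¬ p.2 = 0), mul_zero]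

lemma Wr_zero_coeff {α : ℝ} (n : ℕ) (hn : n ≠ 0) : Wr α 0 n = 0 := by simp [Wr, hn]

lemma Wr_rec {α : ℝ} (k : ℕ) : ∀ n : ℕ,
    ((n:ℝ)+1) * Wr α (k+1) (n+1)
      = (α*n - (k+1)) * Wr α (k+1) n + (k+1) * Wr α k n := by
  induction k with
  | zero =>
    intro n
    rw [Wr_one, Wr_one]
    have := fR_rec' (α := α) n
    rcases Nat.eq_zero_or_pos n with rfl | hn
    · simp only [if_pos rfl] at this
      simp only [Wr, if_pos rfl]
      push_cast
      push_cast at this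
      linarith
    · rw [Wr_zero_coeff n hn.ne']
      simp only [if_neg hn.ne'] at this
      push_cast
      push_cast at this
      linarith
  | succ k ih =>
    intro n
    -- expand LHS
    have expand : ((n:ℝ)+1) * Wr α (k+2) (n+1)
        = (∑ p ∈ Finset.HasAntidiagonal.antidiagonal (n+1), (p.1:ℝ) * fR α p.1 * Wr α (k+1) p.2)
          + ∑ p ∈ Finset.HasAntidiagonal.antidiagonal (n+1), fR α p.1 * ((p.2:ℝ) * Wr α (k+1) p.2) := by
      rw [show Wr α (k+2) (n+1) = ∑ p ∈ Finset.HasAntidiagonal.antidiagonal (n+1), fR α p.1 * Wr α (k+1) p.2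
            from rfl]
      rw [Finset.mul_sum, ← Finset.sum_add_distrib]
      apply Finset.sum_congr rfl
      intro p hp
      have hp' := Finset.HasAntidiagonal.mem_antidiagonal.mp hp
      have hc : ((n:ℝ)+1) = (p.1:ℝ) + p.2 := by exact_mod_cast (congrArg Nat.cast hp').symm
      rw [hc]; ring
    -- first sum
    have hSa : (∑ p ∈ Finset.HasAntidiagonal.antidiagonal (n+1), (p.1:ℝ) * fR α p.1 * Wr α (k+1) p.2)
        = α * (∑ p ∈ Finset.HasAntidiagonal.antidiagonal n, (p.1:ℝ) * fR α p.1 * Wr α (k+1) p.2)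
          - Wr α (k+2) n + Wr α (k+1) n := by
      rw [Finset.Nat.sum_antidiagonal_succ
        (f := fun p => (p.1:ℝ) * fR α p.1 * Wr α (k+1) p.2)]
      simp only [Nat.cast_zero, zero_mul, zero_add]
      have : ∀ p ∈ Finset.HasAntidiagonal.antidiagonal n,
          ((p.1:ℝ)+1) * fR α (p.1+1) * Wr α (k+1) p.2
            = α * ((p.1:ℝ) * fR α p.1 * Wr α (k+1) p.2)
              - fR α p.1 * Wr α (k+1) p.2
              + (if p.1 = 0 then 1 else 0) * Wr α (k+1) p.2 := by
        intro p hp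
        have := fR_rec' (α := α) p.1
        rcases eq_or_ne p.1 0 with h0 | h0
        · simp only [h0, if_pos, Nat.cast_zero] at this ⊢
          linear_combination Wr α (k+1) p.2 * this
        · simp only [h0, if_neg, if_false] at this ⊢
          linear_combination Wr α (k+1) p.2 * this
      rw [Finset.sum_congr rfl (by intro p hp; push_cast; exact this p hp)]
      have e2 : ∑ p ∈ Finset.HasAntidiagonal.antidiagonal n, (if p.1 = 0 then (1:ℝ) else 0) * Wr α (k+1) p.2
          = Wr α (k+1) n := by
        rw [Finset.sum_eq_single_of_mem (0, n) (Finset.HasAntidiagonal.mem_antidiagonal.mpr (by simp))]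
        · simp
        · intro p hp hne
          have hp' := Finset.HasAntidiagonal.mem_antidiagonal.mp hp
          have : p.1 ≠ 0 := by
            intro h; apply hne; ext <;> simp [h] at hp' ⊢ <;> omega
          simp [this]
      rw [Finset.sum_add_distrib, Finset.sum_sub_distrib, ← Finset.mul_sum, e2,
        ← show Wr α (k+2) n = ∑ p ∈ Finset.HasAntidiagonal.antidiagonal n, fR α p.1 * Wr α (k+1) p.2 from rfl]
    -- second sum
    have hSb : (∑ p ∈ Finset.HasAntidiagonal.antidiagonal (n+1), fR α p.1 * ((p.2:ℝ) * Wr α (k+1) p.2))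
        = α * (∑ p ∈ Finset.HasAntidiagonal.antidiagonal n, fR α p.1 * ((p.2:ℝ) * Wr α (k+1) p.2))
          - ((k:ℝ)+1) * Wr α (k+2) n + ((k:ℝ)+1) * Wr α (k+1) n := by
      rw [Finset.Nat.sum_antidiagonal_succ'
        (f := fun p => fR α p.1 * ((p.2:ℝ) * Wr α (k+1) p.2))]
      simp only [Nat.cast_zero, zero_mul, mul_zero, zero_add]
      have : ∀ p ∈ Finset.HasAntidiagonal.antidiagonal n,
          fR α p.1 * (((p.2:ℝ)+1) * Wr α (k+1) (p.2+1))
            = α * (fR α p.1 * ((p.2:ℝ) * Wr α (k+1) p.2))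
              - ((k:ℝ)+1) * (fR α p.1 * Wr α (k+1) p.2)
              + ((k:ℝ)+1) * (fR α p.1 * Wr α k p.2) := by
        intro p hp
        have := ih p.2
        linear_combination fR α p.1 * this
      rw [Finset.sum_congr rfl (by intro p hp; push_cast; exact this p hp)]
      rw [Finset.sum_add_distrib, Finset.sum_sub_distrib, ← Finset.mul_sum,
        ← Finset.mul_sum, ← Finset.mul_sum]
      rw [show Wr α (k+2) n = ∑ p ∈ Finset.HasAntidiagonal.antidiagonal n, fR α p.1 * Wr α (k+1) p.2 from rfl,
        show Wr α (k+1) n = ∑ p ∈ Finset.HasAntidiagonal.antidiagonal n, fR α p.1 * Wr α k p.2 from rfl]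
    -- combine
    have hAB : (∑ p ∈ Finset.HasAntidiagonal.antidiagonal n, (p.1:ℝ) * fR α p.1 * Wr α (k+1) p.2)
        + (∑ p ∈ Finset.HasAntidiagonal.antidiagonal n, fR α p.1 * ((p.2:ℝ) * Wr α (k+1) p.2))
        = (n:ℝ) * Wr α (k+2) n := by
      rw [← Finset.sum_add_distrib,
        show Wr α (k+2) n = ∑ p ∈ Finset.HasAntidiagonal.antidiagonal n, fR α p.1 * Wr α (k+1) p.2 from rfl,
        Finset.mul_sum]
      apply Finset.sum_congr rfl
      intro p hp
      have hp' := Finset.HasAntidiagonal.mem_antidiagonal.mp hp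
      have hc : ((n:ℝ)) = (p.1:ℝ) + p.2 := by exact_mod_cast (congrArg Nat.cast hp').symm
      rw [hc]; ring
    rw [expand, hSa, hSb]
    push_cast
    linear_combination α * hAB

lemma dC_two {α : ℝ} (hα1 : 1 < α) : dC α 2 = (α - 1)/2 := by
  have h : Finset.range 2 \ {0} = {1} := by decide
  rw [dC, if_neg (by norm_num), cwt, h, Finset.prod_singleton,
    abs_of_nonneg (by push_cast; linarith)]
  norm_num [Nat.factorial]

lemma fR_two (α : ℝ) : fR α 2 = (α - 1)/2 := by
  rw [fR, if_neg (by norm_num)]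
  norm_num [Nat.factorial]

lemma dC_rec {α : ℝ} (hα1 : 1 < α) (hα2 : α < 2) (k : ℕ) (hk : 1 ≤ k) :
    ((k:ℝ)+1) * dC α (k+1) = ((k:ℝ) - α) * dC α k := by
  rcases eq_or_ne k 1 with rfl | hk1
  · rw [dC_two hα1]
    simp only [dC, if_pos rfl]
    push_cast
    ring
  · have hk2 : 2 ≤ k := by omega
    have hkR : (2:ℝ) ≤ (k:ℝ) := by exact_mod_cast hk2
    simp only [dC, if_neg (by omega : ¬ k + 1 = 1), if_neg hk1, cwt]
    have hset : Finset.range (k+1) \ {0} = insert k (Finset.range k \ {0}) := by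
      ext i
      simp only [Finset.mem_sdiff, Finset.mem_range, Finset.mem_singleton, Finset.mem_insert]
      omega
    rw [hset, Finset.prod_insert (by simp), abs_of_nonpos (by linarith), Nat.factorial_succ]
    have h1 : (Nat.factorial k : ℝ) ≠ 0 := Nat.cast_ne_zero.mpr (Nat.factorial_ne_zero _)
    have h2 : ((k:ℝ)+1) ≠ 0 := by positivity
    push_cast
    field_simp
    ring

lemma Gsum_eq_zero {α : ℝ} (hα1 : 1 < α) (hα2 : α < 2) :
    ∀ n, 2 ≤ n → ∑ k ∈ Finset.range (n+1), dC α k * Wr α k n = 0 := by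
  intro n hn
  induction n with
  | zero => omega
  | succ n ih =>
    rcases Nat.lt_or_ge n 2 with hn2 | hn2
    · -- n + 1 = 2, i.e. n = 1
      have hn1 : n = 1 := by omega
      subst hn1
      have hW22 : Wr α 2 2 = 1 := by
        rw [show Wr α 2 2 = ∑ p ∈ Finset.HasAntidiagonal.antidiagonal 2, fR α p.1 * Wr α 1 p.2 from rfl]
        rw [show Finset.HasAntidiagonal.antidiagonal 2 = {(0,2),(1,1),(2,0)} from by decide]
        rw [Finset.sum_insert (by decide), Finset.sum_insert (by decide),
          Finset.sum_singleton]
        simp only [Wr_one, fR_zero, fR_one]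
        norm_num
      rw [show (1:ℕ)+1+1 = 3 from rfl]
      rw [Finset.sum_range_succ, Finset.sum_range_succ, Finset.sum_range_succ,
        Finset.sum_range_zero]
      rw [Wr_zero_coeff 2 (by norm_num), Wr_one, hW22, fR_two, dC_two hα1]
      simp [dC]
    · -- inductive step, n ≥ 2
      have hih := ih hn2
      have topzero : Wr α (n+1) n = 0 := Wr_eq_zero_of_lt (lt_add_one n)
      have w0 : Wr α 0 n = 0 := Wr_zero_coeff n (by omega)
      have hS1 : ∑ j ∈ Finset.range (n+1), dC α (j+1) * Wr α (j+1) n = 0 := by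
        have h := Finset.sum_range_succ' (fun k => dC α k * Wr α k n) (n+1)
        rw [Finset.sum_range_succ (fun k => dC α k * Wr α k n) (n+1), topzero, mul_zero,
          add_zero, hih, w0, mul_zero, add_zero] at h
        linarith [h]
      have hS2 : ∑ j ∈ Finset.range (n+1), ((j:ℝ)+1) * dC α (j+1) * Wr α (j+1) n
          = ∑ k ∈ Finset.range (n+1), (k:ℝ) * (dC α k * Wr α k n) := by
        have h := Finset.sum_range_succ' (fun k => (k:ℝ) * (dC α k * Wr α k n)) (n+1)
        rw [Finset.sum_range_succ (fun k => (k:ℝ) * (dC α k * Wr α k n)) (n+1), topzero,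
          mul_zero, mul_zero, add_zero] at h
        rw [show (∑ j ∈ Finset.range (n+1), ((j:ℝ)+1) * dC α (j+1) * Wr α (j+1) n)
            = ∑ j ∈ Finset.range (n+1), ((j+1 : ℕ):ℝ) * (dC α (j+1) * Wr α (j+1) n) from
          Finset.sum_congr rfl (by intro j hj; push_cast; ring)]
        rw [h]
        simp
      have key : ((n:ℝ)+1) * ∑ k ∈ Finset.range (n+2), dC α k * Wr α k (n+1) = 0 := by
        rw [Finset.mul_sum]
        rw [Finset.sum_range_succ' (fun k => ((n:ℝ)+1) * (dC α k * Wr α k (n+1))) (n+1)]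
        rw [Wr_zero_coeff (n+1) (by omega), mul_zero, mul_zero, add_zero]
        have step : ∀ j ∈ Finset.range (n+1),
            ((n:ℝ)+1) * (dC α (j+1) * Wr α (j+1) (n+1))
              = (α*(n:ℝ)) * (dC α (j+1) * Wr α (j+1) n)
                - ((j:ℝ)+1) * dC α (j+1) * Wr α (j+1) n
                + ((j:ℝ) - α) * dC α j * Wr α j n := by
          intro j hj
          have h1 := Wr_rec (α := α) j n
          rcases Nat.eq_zero_or_pos j with rfl | hj1
          · rw [w0] at h1 ⊢
            simp only [Nat.cast_zero]
            linear_combination dC α (0+1) * h1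
          · have h2 := dC_rec hα1 hα2 j hj1
            linear_combination dC α (j+1) * h1 + Wr α j n * h2
        rw [Finset.sum_congr rfl step]
        rw [Finset.sum_add_distrib, Finset.sum_sub_distrib]
        rw [← Finset.mul_sum, hS1, mul_zero, hS2]
        have h3 : ∑ j ∈ Finset.range (n+1), ((j:ℝ) - α) * dC α j * Wr α j n
            = (∑ j ∈ Finset.range (n+1), (j:ℝ) * (dC α j * Wr α j n))
              - α * ∑ j ∈ Finset.range (n+1), dC α j * Wr α j n := by
          rw [Finset.mul_sum, ← Finset.sum_sub_distrib]
          exact Finset.sum_congr rfl (by intro j hj; ring)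
        rw [h3, hih, mul_zero, sub_zero]
        ring
      have hne : ((n:ℝ)+1) ≠ 0 := by positivity
      have := mul_eq_zero.mp key
      rcases this with h | h
      · exact absurd h hne
      · exact h

lemma key_real {α : ℝ} (hα1 : 1 < α) (hα2 : α < 2) (n : ℕ) (hn : 2 ≤ n) :
    ∑ k ∈ Finset.range (n+1), (if k = 1 then 0 else cwt α k * Wr α k n) = fR α n := by
  have G := Gsum_eq_zero hα1 hα2 n hn
  have hterm : ∀ k ∈ Finset.range (n+1),
      (if k = 1 then (0:ℝ) else cwt α k * Wr α k n)
        = dC α k * Wr α k n + (if k = 1 then fR α n else 0) := by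
    intro k _
    rcases eq_or_ne k 1 with rfl | hk
    · simp [dC, Wr_one]
    · simp [dC, hk]
  rw [Finset.sum_congr rfl hterm, Finset.sum_add_distrib, G, zero_add,
    Finset.sum_ite_eq' (Finset.range (n+1)) 1 (fun _ => fR α n)]
  simp [Finset.mem_range]
  omega

lemma gamma_ratio {α : ℝ} (hα1 : 1 < α) (m : ℕ) :
    (∏ i ∈ Finset.Icc 1 m, ((i:ℝ)*α - 1))
      = α^m * (Real.Gamma ((1 - 1/α) + m) / Real.Gamma (1 - 1/α)) := by
  have hα0 : (0:ℝ) < α := by linarith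
  have hx : (0:ℝ) < 1 - 1/α := by
    have : 1/α < 1 := by rw [div_lt_one hα0]; linarith
    linarith
  have hΓ : Real.Gamma (1 - 1/α) ≠ 0 := (Real.Gamma_pos_of_pos hx).ne'
  have hGam : ∀ m : ℕ, Real.Gamma ((1 - 1/α) + m)
      = (∏ i ∈ Finset.range m, ((1 - 1/α) + i)) * Real.Gamma (1 - 1/α) := by
    intro m
    induction m with
    | zero => simp
    | succ m ih =>
      have hne : (1 - 1/α) + m ≠ 0 := by positivity
      have : ((1:ℝ) - 1/α) + (m+1 : ℕ) = ((1 - 1/α) + m) + 1 := by push_cast; ring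
      rw [this, Real.Gamma_add_one hne, ih, Finset.prod_range_succ]
      ring
  rw [hGam m, mul_div_assoc, div_self hΓ, mul_one]
  induction m with
  | zero => simp
  | succ m ih =>
    have hc : ((m+1:ℕ):ℝ)*α - 1 = α * ((1 - 1/α) + m) := by
      have : α ≠ 0 := by linarith
      push_cast
      field_simp
      ring
    rw [Finset.prod_Icc_succ_top (by omega), ih, Finset.prod_range_succ, pow_succ, hc]
    ring


lemma PTree.leaves_node (cs : List PTree) :
    (PTree.node cs).leaves = max 1 ((cs.map PTree.leaves).sum) := by
  rw [PTree.leaves]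
  congr 1
  simp

lemma PTree.good_node (cs : List PTree) :
    (PTree.node cs).good = true ↔ cs.length ≠ 1 ∧ ∀ t ∈ cs, t.good = true := by
  rw [PTree.good]
  simp

lemma PTree.w_node (α : ℝ) (cs : List PTree) :
    (PTree.node cs).w α = cwt α cs.length * (cs.map (PTree.w α)).prod := by
  rw [PTree.w, cwt]
  congr 1
  simp

lemma PTree.one_le_leaves (T : PTree) : 1 ≤ T.leaves := by
  obtain ⟨cs⟩ := T
  rw [PTree.leaves]; omega

lemma PTree.w_nonneg (α : ℝ) (T : PTree) : 0 ≤ PTree.w α T := by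
  induction T using PTree.w.induct with
  | _ cs ih =>
    rw [PTree.w]
    apply mul_nonneg
    · positivity
    · apply List.prod_nonneg
      intro x hx
      simp only [List.mem_map] at hx
      obtain ⟨d, hd, rfl⟩ := hx
      exact ih d

lemma ofReal_list_prod (l : List ℝ) (h : ∀ x ∈ l, 0 ≤ x) :
    ENNReal.ofReal l.prod = (l.map ENNReal.ofReal).prod := by
  induction l with
  | nil => simp
  | cons a t ih =>
    simp only [List.prod_cons, List.map_cons]
    rw [ENNReal.ofReal_mul (h a (by simp)), ih (fun x hx => h x (List.mem_cons_of_mem _ hx))]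

noncomputable def tA (α : ℝ) (n : ℕ) (T : PTree) : ℝ≥0∞ :=
  if T.leaves = n ∧ T.good then ENNReal.ofReal (T.w α) else 0

noncomputable def tS (α : ℝ) (n : ℕ) : ℝ≥0∞ := ∑' T : PTree, tA α n T

noncomputable def tB (α : ℝ) (k n : ℕ) (cs : List PTree) : ℝ≥0∞ :=
  if cs.length = k ∧ (∀ t ∈ cs, t.good = true) ∧ (cs.map PTree.leaves).sum = n
  then (cs.map (fun t => ENNReal.ofReal (t.w α))).prod else 0

noncomputable def tL (α : ℝ) (k n : ℕ) : ℝ≥0∞ := ∑' cs : List PTree, tB α k n cs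

lemma tS_zero (α : ℝ) : tS α 0 = 0 := by
  unfold tS
  convert tsum_zero with T
  unfold tA
  rw [if_neg]
  rintro ⟨h1, -⟩
  have := T.one_le_leaves
  omega

lemma tA_nil (α : ℝ) : tA α 1 (PTree.node []) = 1 := by
  unfold tA
  rw [if_pos]
  · rw [PTree.w_node]
    simp [cwt, Nat.factorial]
  · constructor
    · rw [PTree.leaves_node]; simp
    · rw [PTree.good_node]; simp

lemma tA_one_ne (α : ℝ) (T : PTree) (hT : T ≠ PTree.node []) : tA α 1 T = 0 := by
  obtain ⟨cs⟩ := T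
  have hcs : cs ≠ [] := by rintro rfl; exact hT rfl
  unfold tA
  rw [if_neg]
  rintro ⟨h1, h2⟩
  rw [PTree.leaves_node] at h1
  rw [PTree.good_node] at h2
  have hlen : 1 ≤ cs.length := by
    rcases cs with _ | ⟨a, t⟩
    · exact absurd rfl hcs
    · simp
  have hsum : cs.length ≤ (cs.map PTree.leaves).sum := by
    calc cs.length = (cs.map PTree.leaves).length := by simp
    _ ≤ (cs.map PTree.leaves).sum := by
        apply List.length_le_sum_of_one_le
        intro x hx
        simp only [List.mem_map] at hx
        obtain ⟨t, _, rfl⟩ := hx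
        exact t.one_le_leaves
  omega

lemma tS_one (α : ℝ) : tS α 1 = 1 := by
  unfold tS
  rw [tsum_eq_single (PTree.node []) (fun T hT => tA_one_ne α T hT)]
  exact tA_nil α

lemma tL_zero (α : ℝ) (n : ℕ) : tL α 0 n = if n = 0 then 1 else 0 := by
  unfold tL
  rw [tsum_eq_single ([] : List PTree)]
  · unfold tB
    rcases eq_or_ne n 0 with rfl | hn
    · rw [if_pos (by simp), if_pos rfl]; simp
    · rw [if_neg (by simp [Ne.symm hn]), if_neg hn]
  · intro cs hcs
    unfold tB
    rw [if_neg]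
    rintro ⟨h1, -, -⟩
    exact hcs (List.length_eq_zero_iff.mp h1)

lemma tB_cons (α : ℝ) (k n : ℕ) (T : PTree) (cs : List PTree) :
    tB α (k+1) n (T :: cs)
      = ∑ p ∈ Finset.HasAntidiagonal.antidiagonal n, tA α p.1 T * tB α k p.2 cs := by
  by_cases hC : T.good = true ∧ (∀ t ∈ cs, t.good = true) ∧ cs.length = k
      ∧ T.leaves + (cs.map PTree.leaves).sum = n
  · obtain ⟨hT, hcs, hlen, hsum⟩ := hC
    rw [Finset.sum_eq_single_of_mem (T.leaves, (cs.map PTree.leaves).sum)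
        (Finset.HasAntidiagonal.mem_antidiagonal.mpr hsum)]
    · have e1 : tB α (k+1) n (T :: cs)
          = ((T :: cs).map (fun t => ENNReal.ofReal (t.w α))).prod := by
        unfold tB
        rw [if_pos]
        refine ⟨by simp [hlen], ?_, by simpa using hsum⟩
        intro t ht
        rcases List.mem_cons.mp ht with rfl | ht
        · exact hT
        · exact hcs t ht
      have e2 : tA α T.leaves T = ENNReal.ofReal (T.w α) := by
        unfold tA
        rw [if_pos ⟨rfl, hT⟩]
      have e3 : tB α k ((cs.map PTree.leaves).sum) cs
          = (cs.map (fun t => ENNReal.ofReal (t.w α))).prod := by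
        unfold tB
        rw [if_pos ⟨hlen, hcs, rfl⟩]
      rw [e1, e2, e3]
      simp
    · intro p hp hne
      rcases eq_or_ne p.1 T.leaves with h1 | h1
      · have h2 : p.2 ≠ (cs.map PTree.leaves).sum := by
          intro h2; apply hne; ext <;> simp [h1, h2]
        have : tB α k p.2 cs = 0 := by
          unfold tB
          rw [if_neg (by rintro ⟨-, -, h⟩; exact h2 h.symm)]
        rw [this, mul_zero]
      · have : tA α p.1 T = 0 := by
          unfold tA
          rw [if_neg (by rintro ⟨h, -⟩; exact h1 h.symm)]
        rw [this, zero_mul]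
  · have e0 : tB α (k+1) n (T :: cs) = 0 := by
      unfold tB
      rw [if_neg (by
        rintro ⟨h1, h2, h3⟩
        simp only [List.length_cons, Nat.add_right_cancel_iff] at h1
        simp only [List.mem_cons, forall_eq_or_imp] at h2
        simp only [List.map_cons, List.sum_cons] at h3
        exact hC ⟨h2.1, h2.2, h1, h3⟩)]
    rw [e0]
    apply (Finset.sum_eq_zero _).symm
    intro p hp
    by_cases hT : T.good = true ∧ T.leaves = p.1
    · by_cases hcs : (∀ t ∈ cs, t.good = true) ∧ cs.length = k
          ∧ (cs.map PTree.leaves).sum = p.2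
      · exfalso
        apply hC
        refine ⟨hT.1, hcs.1, hcs.2.1, ?_⟩
        rw [hT.2, hcs.2.2]
        exact Finset.HasAntidiagonal.mem_antidiagonal.mp hp
      · have : tB α k p.2 cs = 0 := by
          unfold tB
          rw [if_neg (by rintro ⟨h1, h2, h3⟩; exact hcs ⟨h2, h1, h3⟩)]
        rw [this, mul_zero]
    · have : tA α p.1 T = 0 := by
        unfold tA
        rw [if_neg (by rintro ⟨h1, h2⟩; exact hT ⟨h2, h1⟩)]
      rw [this, zero_mul]

lemma tL_succ (α : ℝ) (k n : ℕ) :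
    tL α (k+1) n = ∑ p ∈ Finset.HasAntidiagonal.antidiagonal n, tS α p.1 * tL α k p.2 := by
  have hinj : Function.Injective (fun p : PTree × List PTree => p.1 :: p.2) := by
    rintro ⟨a, l⟩ ⟨b, m⟩ h
    simp only [List.cons.injEq] at h
    simp [h.1, h.2]
  have hsupp : Function.support (tB α (k+1) n)
      ⊆ Set.range (fun p : PTree × List PTree => p.1 :: p.2) := by
    intro cs hcs
    rcases cs with _ | ⟨a, t⟩
    · exfalso
      apply hcs
      unfold tB
      rw [if_neg (by rintro ⟨h, -, -⟩; simp at h)]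
    · exact ⟨(a, t), rfl⟩
  calc tL α (k+1) n = ∑' p : PTree × List PTree, tB α (k+1) n (p.1 :: p.2) :=
        (hinj.tsum_eq hsupp).symm
    _ = ∑' p : PTree × List PTree,
          ∑ q ∈ Finset.HasAntidiagonal.antidiagonal n, tA α q.1 p.1 * tB α k q.2 p.2 := by
        exact tsum_congr fun p => tB_cons α k n p.1 p.2
    _ = ∑ q ∈ Finset.HasAntidiagonal.antidiagonal n, ∑' p : PTree × List PTree,
          tA α q.1 p.1 * tB α k q.2 p.2 :=
        Summable.tsum_finsetSum (fun _ _ => ENNReal.summable)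
    _ = ∑ q ∈ Finset.HasAntidiagonal.antidiagonal n, tS α q.1 * tL α k q.2 := by
        apply Finset.sum_congr rfl
        intro q _
        rw [ENNReal.tsum_prod (f := fun T cs => tA α q.1 T * tB α k q.2 cs)]
        unfold tS tL
        rw [← ENNReal.tsum_mul_right]
        exact tsum_congr fun T => by rw [← ENNReal.tsum_mul_left]

lemma tA_node {α : ℝ} (n : ℕ) (hn : 2 ≤ n) (cs : List PTree) :
    tA α n (PTree.node cs)
      = ∑ k ∈ Finset.range (n+1),
          (if k = 1 then 0 else ENNReal.ofReal (cwt α k) * tB α k n cs) := by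
  by_cases hC : (∀ t ∈ cs, t.good = true) ∧ (cs.map PTree.leaves).sum = n ∧ cs.length ≠ 1
  · obtain ⟨hg, hs, hl⟩ := hC
    have hlen_le : cs.length ≤ n := by
      have : cs.length ≤ (cs.map PTree.leaves).sum := by
        calc cs.length = (cs.map PTree.leaves).length := by simp
        _ ≤ (cs.map PTree.leaves).sum := by
            apply List.length_le_sum_of_one_le
            intro x hx
            simp only [List.mem_map] at hx
            obtain ⟨t, _, rfl⟩ := hx
            exact t.one_le_leaves
      omega
    rw [Finset.sum_eq_single_of_mem cs.length
        (Finset.mem_range.mpr (by omega))]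
    · have eA : tA α n (PTree.node cs) = ENNReal.ofReal ((PTree.node cs).w α) := by
        unfold tA
        rw [if_pos]
        refine ⟨?_, ?_⟩
        · rw [PTree.leaves_node, hs]; omega
        · rw [PTree.good_node]; exact ⟨hl, hg⟩
      have eB : tB α cs.length n cs = (cs.map (fun t => ENNReal.ofReal (t.w α))).prod := by
        unfold tB
        rw [if_pos ⟨rfl, hg, hs⟩]
      rw [eA, if_neg hl, eB, PTree.w_node,
        ENNReal.ofReal_mul (cwt_nonneg α cs.length),
        ofReal_list_prod _ (fun x hx => by
          simp only [List.mem_map] at hx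
          obtain ⟨t, _, rfl⟩ := hx
          exact t.w_nonneg α)]
      rw [List.map_map]
      rfl
    · intro k hk hkne
      rcases eq_or_ne k 1 with rfl | hk1
      · rw [if_pos rfl]
      · rw [if_neg hk1]
        have : tB α k n cs = 0 := by
          unfold tB
          rw [if_neg (by rintro ⟨h, -, -⟩; exact hkne (h ▸ rfl))]
        rw [this, mul_zero]
  · have eA : tA α n (PTree.node cs) = 0 := by
      unfold tA
      rw [if_neg]
      rintro ⟨h1, h2⟩
      rw [PTree.leaves_node] at h1
      rw [PTree.good_node] at h2
      exact hC ⟨h2.2, by omega, h2.1⟩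
    rw [eA]
    apply (Finset.sum_eq_zero _).symm
    intro k hk
    rcases eq_or_ne k 1 with rfl | hk1
    · rw [if_pos rfl]
    · rw [if_neg hk1]
      have : tB α k n cs = 0 := by
        unfold tB
        rw [if_neg]
        rintro ⟨h1, h2, h3⟩
        exact hC ⟨h2, h3, h1 ▸ hk1⟩
      rw [this, mul_zero]

lemma node_injective : Function.Injective PTree.node := by
  intro a b h
  cases h
  rfl

lemma tS_rec {α : ℝ} (n : ℕ) (hn : 2 ≤ n) :
    tS α n = ∑ k ∈ Finset.range (n+1),
      (if k = 1 then 0 else ENNReal.ofReal (cwt α k) * tL α k n) := by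
  have hsupp : Function.support (tA α n) ⊆ Set.range PTree.node := by
    intro T _
    obtain ⟨cs⟩ := T
    exact ⟨cs, rfl⟩
  calc tS α n = ∑' cs : List PTree, tA α n (PTree.node cs) :=
        (node_injective.tsum_eq hsupp).symm
    _ = ∑' cs : List PTree, ∑ k ∈ Finset.range (n+1),
          (if k = 1 then 0 else ENNReal.ofReal (cwt α k) * tB α k n cs) :=
        tsum_congr fun cs => tA_node n hn cs
    _ = ∑ k ∈ Finset.range (n+1), ∑' cs : List PTree,
          (if k = 1 then 0 else ENNReal.ofReal (cwt α k) * tB α k n cs) :=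
        Summable.tsum_finsetSum (fun _ _ => ENNReal.summable)
    _ = ∑ k ∈ Finset.range (n+1),
          (if k = 1 then 0 else ENNReal.ofReal (cwt α k) * tL α k n) := by
        apply Finset.sum_congr rfl
        intro k _
        rcases eq_or_ne k 1 with rfl | hk1
        · simp
        · simp only [if_neg hk1]
          unfold tL
          rw [← ENNReal.tsum_mul_left]

lemma tS_eq_fR {α : ℝ} (hα1 : 1 < α) (hα2 : α < 2) :
    ∀ n : ℕ, tS α n = ENNReal.ofReal (fR α n) := by
  intro n
  induction n using Nat.strong_induction_on with
  | _ n IH =>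
    rcases Nat.lt_or_ge n 2 with hn | hn
    · interval_cases n
      · rw [tS_zero, fR_zero, ENNReal.ofReal_zero]
      · rw [tS_one, fR_one, ENNReal.ofReal_one]
    · -- inner lemma
      have inner : ∀ k : ℕ, ∀ m : ℕ, m < n → tL α k m = ENNReal.ofReal (Wr α k m) := by
        intro k
        induction k with
        | zero =>
          intro m hm
          rw [tL_zero]
          rcases eq_or_ne m 0 with rfl | hm0
          · simp [Wr]
          · simp [Wr, hm0]
        | succ k ihk =>
          intro m hm
          rw [tL_succ]
          rw [show Wr α (k+1) m = ∑ p ∈ Finset.HasAntidiagonal.antidiagonal m, fR α p.1 * Wr α k p.2 from rfl]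
          rw [ENNReal.ofReal_sum_of_nonneg
            (fun p _ => mul_nonneg (fR_nonneg hα1 _) (Wr_nonneg hα1 _ _))]
          apply Finset.sum_congr rfl
          intro p hp
          have hp' := Finset.HasAntidiagonal.mem_antidiagonal.mp hp
          rw [IH p.1 (by omega), ihk p.2 (by omega),
            ENNReal.ofReal_mul (fR_nonneg hα1 _)]
      have full : ∀ k : ℕ, k ≠ 1 → tL α k n = ENNReal.ofReal (Wr α k n) := by
        intro k hk1
        rcases Nat.eq_zero_or_pos k with rfl | hkpos
        · rw [tL_zero, if_neg (by omega), Wr_zero_coeff n (by omega), ENNReal.ofReal_zero]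
        · obtain ⟨j, rfl⟩ : ∃ j, k = j + 1 := ⟨k-1, by omega⟩
          have hj1 : 1 ≤ j := by omega
          rw [tL_succ]
          rw [show Wr α (j+1) n = ∑ p ∈ Finset.HasAntidiagonal.antidiagonal n, fR α p.1 * Wr α j p.2 from rfl]
          rw [ENNReal.ofReal_sum_of_nonneg
            (fun p _ => mul_nonneg (fR_nonneg hα1 _) (Wr_nonneg hα1 _ _))]
          apply Finset.sum_congr rfl
          intro p hp
          have hp' := Finset.HasAntidiagonal.mem_antidiagonal.mp hp
          rcases eq_or_ne p.1 0 with h1 | h1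
          · rw [h1, IH 0 (by omega), fR_zero]
            simp
          · rcases eq_or_ne p.2 0 with h2 | h2
            · rw [h2, inner j 0 (by omega), Wr_eq_zero_of_lt (by omega)]
              simp
            · rw [IH p.1 (by omega), inner j p.2 (by omega),
                ENNReal.ofReal_mul (fR_nonneg hα1 _)]
      rw [tS_rec n hn]
      have : ∀ k ∈ Finset.range (n+1),
          (if k = 1 then (0:ℝ≥0∞) else ENNReal.ofReal (cwt α k) * tL α k n)
            = ENNReal.ofReal (if k = 1 then 0 else cwt α k * Wr α k n) := by
        intro k _
        rcases eq_or_ne k 1 with rfl | hk1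
        · simp
        · rw [if_neg hk1, if_neg hk1, full k hk1,
            ← ENNReal.ofReal_mul (cwt_nonneg α k)]
      rw [Finset.sum_congr rfl this,
        ← ENNReal.ofReal_sum_of_nonneg (fun k _ => by
          rcases eq_or_ne k 1 with rfl | hk1
          · simp
          · rw [if_neg hk1]
            exact mul_nonneg (cwt_nonneg α k) (Wr_nonneg hα1 _ _)),
        key_real hα1 hα2 n hn]

/-- For `α ∈ (1,2)`, the sum over all plane trees `T` with `n` leaves and no
vertex of out-degree `1` of `∏_v |(α-1)(α-2)⋯(α-c_v(T)+1)|/c_v(T)!` equals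
`(α-1)(2α-1)⋯((n-1)α-1)/n! = α^{n-1}[1-1/α]_{n-1}/n!`. -/
theorem stmt12 (α : ℝ) (hα : 1 < α ∧ α < 2) (n : ℕ) (hn : 1 ≤ n) :
    (∑' T : {T : PTree // T.leaves = n ∧ T.good}, PTree.w α T.1
        = (∏ i ∈ Finset.Icc 1 (n - 1), ((i:ℝ) * α - 1)) / (Nat.factorial n))
    ∧ (∏ i ∈ Finset.Icc 1 (n - 1), ((i:ℝ) * α - 1)) / (Nat.factorial n)
        = α ^ (n - 1) * (Real.Gamma ((1 - 1/α) + (n - 1)) / Real.Gamma (1 - 1/α))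
            / (Nat.factorial n) := by
  obtain ⟨hα1, hα2⟩ := hα
  constructor
  · have h1 : (∑' T : {T : PTree // T.leaves = n ∧ T.good},
        ENNReal.ofReal (PTree.w α T.1)) = tS α n := by
      calc (∑' T : {T : PTree // T.leaves = n ∧ T.good}, ENNReal.ofReal (PTree.w α T.1))
          = ∑' T : PTree, Set.indicator {T : PTree | T.leaves = n ∧ T.good = true}
              (fun T => ENNReal.ofReal (T.w α)) T :=
            tsum_subtype {T : PTree | T.leaves = n ∧ T.good = true}
              (fun T => ENNReal.ofReal (T.w α))
        _ = tS α n := by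
            refine tsum_congr fun T => ?_
            rw [Set.indicator_apply]
            unfold tA
            by_cases h : T.leaves = n ∧ T.good = true
            · rw [if_pos (Set.mem_setOf_eq ▸ h), if_pos h]
            · rw [if_neg (by simpa [Set.mem_setOf_eq] using h), if_neg h]
    have h2 : ∑' T : {T : PTree // T.leaves = n ∧ T.good}, PTree.w α T.1
        = (tS α n).toReal := by
      rw [← h1, ENNReal.tsum_toReal_eq (fun _ => ENNReal.ofReal_ne_top)]
      exact tsum_congr fun T => (ENNReal.toReal_ofReal (PTree.w_nonneg α T.1)).symm
    rw [h2, tS_eq_fR hα1 hα2 n, ENNReal.toReal_ofReal (fR_nonneg hα1 n)]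
    rw [fR, if_neg (by omega)]
  · have hc : ((n:ℝ) - 1) = ((n - 1 : ℕ) : ℝ) := by
      rw [Nat.cast_sub hn]
      norm_num
    rw [hc, ← gamma_ratio hα1 (n-1)]
end

section
/- For α ∈ (1,2) and r > 0, ∫₀^1 y^{-1/α}(1-y^r)(1-y)^{1/α - 2} dy = (r·Γ(1+1/α)/(1-1/α)) · B(r+1-1/α, 1/α)/Γ(1+1/α) = r·B(r+1-1/α,1/α)/(1-1/α). -/
open MeasureTheory Real Set

lemma one_sub_rpow_le' {r y : ℝ} (hy0 : 0 < y) (hy1 : y ≤ 1) :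
    1 - y ^ r ≤ max r 1 * (1 - y) := by
  rcases le_total r 1 with h | h
  · have : y ^ (1:ℝ) ≤ y ^ r := Real.rpow_le_rpow_of_exponent_ge hy0 hy1 h
    rw [Real.rpow_one] at this
    have h1 : (1:ℝ) ≤ max r 1 := le_max_right _ _
    nlinarith [sub_nonneg.2 hy1]
  · have hb := one_add_mul_self_le_rpow_one_add (s := y - 1) (by linarith) h
    have : 1 + r * (y - 1) ≤ y ^ r := by simpa using hb
    have h1 : r ≤ max r 1 := le_max_left _ _
    nlinarith [sub_nonneg.2 hy1]

lemma betaEqOn {a b : ℝ} : ∀ x ∈ Icc (0:ℝ) 1,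
    (x:ℂ) ^ ((a:ℂ) - 1) * (1 - (x:ℂ)) ^ ((b:ℂ) - 1)
      = ((x ^ (a-1) * (1-x) ^ (b-1) : ℝ) : ℂ) := by
  intro x hx
  rw [Complex.ofReal_mul, Complex.ofReal_cpow hx.1, Complex.ofReal_cpow (by linarith [hx.2])]
  push_cast
  ring_nf

lemma realBeta_integrableOn {a b : ℝ} (ha : 0 < a) (hb : 0 < b) :
    IntegrableOn (fun x : ℝ => x ^ (a-1) * (1-x) ^ (b-1)) (Ioc 0 1) := by
  have h := (Complex.betaIntegral_convergent (u := a) (v := b) (by simpa) (by simpa)).1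
  have h2 := h.congr_fun (fun x hx => betaEqOn x ⟨hx.1.le, hx.2⟩) measurableSet_Ioc
  have h3 := h2.re
  simp at h3
  exact h3

lemma realBeta_integral {a b : ℝ} (ha : 0 < a) (hb : 0 < b) :
    ∫ x in (0:ℝ)..1, x ^ (a-1) * (1-x) ^ (b-1)
      = Real.Gamma a * Real.Gamma b / Real.Gamma (a+b) := by
  have key := Complex.Gamma_mul_Gamma_eq_betaIntegral (s := a) (t := b) (by simpa) (by simpa)
  have hbeta : Complex.betaIntegral a b
      = ((∫ x in (0:ℝ)..1, x ^ (a-1) * (1-x) ^ (b-1) : ℝ) : ℂ) := by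
    rw [Complex.betaIntegral, ← intervalIntegral.integral_ofReal]
    exact intervalIntegral.integral_congr (fun x hx => betaEqOn x (by rwa [uIcc_of_le zero_le_one] at hx))
  rw [hbeta, ← Complex.ofReal_add, Complex.Gamma_ofReal, Complex.Gamma_ofReal,
    Complex.Gamma_ofReal, ← Complex.ofReal_mul, ← Complex.ofReal_mul,
    Complex.ofReal_inj] at key
  have hG : Real.Gamma (a+b) ≠ 0 := (Real.Gamma_pos_of_pos (by linarith)).ne'
  field_simp
  linarith [key]

/-- For `α ∈ (1,2)` and `r > 0`,
`∫₀^1 y^{-1/α}(1-y^r)(1-y)^{1/α-2} dy = r B(r+1-1/α, 1/α)/(1-1/α)`. -/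
theorem stmt15 (α : ℝ) (hα : 1 < α ∧ α < 2) (r : ℝ) (hr : 0 < r) :
    ∫ y in Ioo (0:ℝ) 1, y ^ (-(1/α)) * (1 - y ^ r) * (1 - y) ^ (1/α - 2)
      = r * Beta (r + 1 - 1/α) (1/α) / (1 - 1/α) := by
  obtain ⟨hα1, hα2⟩ := hα
  set s : ℝ := 1/α with hsdef
  have hs0 : 0 < s := by positivity
  have hs1 : s < 1 := by rw [hsdef]; rw [div_lt_one (by linarith)]; linarith
  have hs1' : (0:ℝ) < 1 - s := by linarith
  set C : ℝ := max r 1 with hC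
  have hC0 : 0 < C := lt_max_of_lt_right one_pos
  -- integrability of the main integrand on Ioc 0 1
  have hfmeas : AEStronglyMeasurable
      (fun y : ℝ => y ^ (-s) * (1 - y ^ r) * (1 - y) ^ (s - 2))
      (volume.restrict (Ioc (0:ℝ) 1)) := by
    apply Measurable.aestronglyMeasurable
    fun_prop
  have hbeta1 : IntegrableOn (fun y : ℝ => y ^ (-s) * (1-y) ^ (s-1)) (Ioc 0 1) := by
    have := realBeta_integrableOn (a := 1 - s) (b := s) hs1' hs0
    simpa [show (1 - s) - 1 = -s by ring] using this
  have hInt : IntegrableOn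
      (fun y : ℝ => y ^ (-s) * (1 - y ^ r) * (1 - y) ^ (s - 2)) (Ioc 0 1) := by
    apply Integrable.mono' (hbeta1.const_mul C) hfmeas
    filter_upwards [ae_restrict_mem measurableSet_Ioc] with y hy
    obtain ⟨hy0, hy1⟩ := hy
    have hyr : y ^ r ≤ 1 := Real.rpow_le_one hy0.le hy1 hr.le
    have hA : (0:ℝ) ≤ y ^ (-s) := Real.rpow_nonneg hy0.le _
    have hB : (0:ℝ) ≤ (1 - y) ^ (s-2) := Real.rpow_nonneg (by linarith) _
    have hnn : 0 ≤ y ^ (-s) * (1 - y ^ r) * (1 - y) ^ (s - 2) :=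
      mul_nonneg (mul_nonneg hA (by linarith)) hB
    rw [Real.norm_of_nonneg hnn]
    rcases eq_or_lt_of_le hy1 with h1 | h1
    · subst h1
      simp [Real.one_rpow, Real.zero_rpow (show s-2 ≠ 0 by linarith),
        Real.zero_rpow (show s-1 ≠ 0 by linarith)]
    · have h1y : (0:ℝ) < 1 - y := by linarith
      have key := one_sub_rpow_le' (r := r) hy0 hy1
      have e1 : (1-y) ^ (s-1) = (1-y) ^ (s-2) * (1-y) := by
        rw [show s - 1 = s - 2 + 1 by ring, Real.rpow_add_one h1y.ne']
      rw [e1]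
      calc y ^ (-s) * (1 - y ^ r) * (1 - y) ^ (s - 2)
          ≤ y ^ (-s) * (C * (1-y)) * (1 - y) ^ (s - 2) := by
            apply mul_le_mul_of_nonneg_right _ hB
            exact mul_le_mul_of_nonneg_left key hA
        _ = C * (y ^ (-s) * ((1-y) ^ (s-2) * (1-y))) := by ring
  have hbeta2 : IntegrableOn (fun y : ℝ => y ^ (r-s) * (1-y) ^ (s-1)) (Ioc 0 1) := by
    have := realBeta_integrableOn (a := r + 1 - s) (b := s) (by linarith) hs0
    simpa [show (r + 1 - s) - 1 = r - s by ring] using this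
  -- FTC
  set F : ℝ → ℝ := fun y => (1 - y ^ r) * (y ^ (1-s) * (1-y) ^ (s-1)) / (1-s) with hF
  have hderiv : ∀ x ∈ Ioo (0:ℝ) 1, HasDerivAt F
      (x ^ (-s) * (1 - x ^ r) * (1 - x) ^ (s - 2)
        - (r/(1-s)) * (x ^ (r-s) * (1-x) ^ (s-1))) x := by
    intro x hx
    obtain ⟨hx0, hx1⟩ := hx
    have h1x : (0:ℝ) < 1 - x := by linarith
    have d1 : HasDerivAt (fun y : ℝ => 1 - y ^ r) (-(1 * r * x ^ (r-1))) x :=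
      ((hasDerivAt_id x).rpow_const (Or.inl hx0.ne')).const_sub 1
    have d2 : HasDerivAt (fun y : ℝ => y ^ (1-s)) (1 * (1-s) * x ^ (1-s-1)) x :=
      (hasDerivAt_id x).rpow_const (Or.inl hx0.ne')
    have d3 : HasDerivAt (fun y : ℝ => (1-y) ^ (s-1)) (-1 * (s-1) * (1-x) ^ (s-1-1)) x :=
      ((hasDerivAt_id x).const_sub 1).rpow_const (Or.inl h1x.ne')
    have dF := ((d1.mul (d2.mul d3)).div_const (1-s))
    refine dF.congr_deriv (Eq.symm ?_)
    simp only [Pi.mul_apply]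
    have hne : (1:ℝ) - s ≠ 0 := hs1'.ne'
    rw [show (1:ℝ) - s - 1 = -s by ring, show s - 1 - 1 = s - 2 by ring,
      Real.rpow_sub_one hx0.ne' r,
      show r - s = r + -s by ring, Real.rpow_add hx0,
      show (1:ℝ) - s = -s + 1 by ring, Real.rpow_add_one hx0.ne',
      show s - 1 = s - 2 + 1 by ring, Real.rpow_add_one h1x.ne']
    have hne' : -s + 1 ≠ 0 := by linarith
    field_simp
    ring
  have hint : IntervalIntegrable
      (fun y : ℝ => y ^ (-s) * (1 - y ^ r) * (1 - y) ^ (s - 2)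
        - (r/(1-s)) * (y ^ (r-s) * (1-y) ^ (s-1))) volume 0 1 := by
    rw [intervalIntegrable_iff_integrableOn_Ioc_of_le zero_le_one]
    exact hInt.sub (hbeta2.const_mul _)
  have hT0 : Filter.Tendsto F (nhdsWithin 0 (Ioi 0)) (nhds 0) := by
    have t1 : Filter.Tendsto (fun y : ℝ => y ^ r) (nhdsWithin 0 (Ioi 0)) (nhds ((0:ℝ) ^ r)) :=
      (Real.continuousAt_rpow_const 0 r (Or.inr hr.le)).tendsto.mono_left nhdsWithin_le_nhds
    rw [Real.zero_rpow hr.ne'] at t1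
    have t2 : Filter.Tendsto (fun y : ℝ => y ^ (1-s)) (nhdsWithin 0 (Ioi 0))
        (nhds ((0:ℝ) ^ (1-s))) :=
      (Real.continuousAt_rpow_const 0 (1-s) (Or.inr hs1'.le)).tendsto.mono_left
        nhdsWithin_le_nhds
    rw [Real.zero_rpow hs1'.ne'] at t2
    have t3 : Filter.Tendsto (fun y : ℝ => (1-y) ^ (s-1)) (nhdsWithin 0 (Ioi 0)) (nhds 1) := by
      have hc : ContinuousAt (fun y : ℝ => (1-y) ^ (s-1)) 0 :=
        ContinuousAt.rpow_const (by fun_prop) (Or.inl (by norm_num))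
      have t3' : Filter.Tendsto (fun y : ℝ => (1-y) ^ (s-1)) (nhdsWithin 0 (Ioi 0))
          (nhds (((1:ℝ)-0) ^ (s-1))) := hc.tendsto.mono_left nhdsWithin_le_nhds
      simpa [Real.one_rpow] using t3'
    have tsum : Filter.Tendsto (fun y : ℝ => (1 - y ^ r) * (y ^ (1-s) * (1-y) ^ (s-1)) / (1-s))
        (nhdsWithin 0 (Ioi 0)) (nhds ((1 - 0) * (0 * 1) / (1-s))) :=
      ((tendsto_const_nhds.sub t1).mul (t2.mul t3)).div_const (1-s)
    rw [hF]
    simpa using tsum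
  have hT1 : Filter.Tendsto F (nhdsWithin 1 (Iio 1)) (nhds 0) := by
    have tG : Filter.Tendsto (fun y : ℝ => (1 - y ^ r) * (1-y) ^ (s-1))
        (nhdsWithin 1 (Iio 1)) (nhds 0) := by
      apply squeeze_zero' (g := fun y : ℝ => C * (1-y) ^ s)
      · filter_upwards [Ioo_mem_nhdsLT_of_mem (show (1:ℝ) ∈ Ioc 0 1 by constructor <;> norm_num)]
          with y hy
        have hyr : y ^ r ≤ 1 := Real.rpow_le_one hy.1.le hy.2.le hr.le
        have : (0:ℝ) ≤ (1-y) ^ (s-1) := Real.rpow_nonneg (by linarith [hy.2]) _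
        nlinarith
      · filter_upwards [Ioo_mem_nhdsLT_of_mem (show (1:ℝ) ∈ Ioc 0 1 by constructor <;> norm_num)]
          with y hy
        have h1y : (0:ℝ) < 1 - y := by linarith [hy.2]
        have key := one_sub_rpow_le' (r := r) hy.1 hy.2.le
        have e1 : (1-y) ^ (s-1) = (1-y) ^ s / (1-y) := Real.rpow_sub_one h1y.ne' s
        have hB : (0:ℝ) ≤ (1-y) ^ (s-1) := Real.rpow_nonneg h1y.le _
        have step : (1 - y ^ r) * (1-y) ^ (s-1) ≤ (C * (1-y)) * (1-y) ^ (s-1) :=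
          mul_le_mul_of_nonneg_right key hB
        calc (1 - y ^ r) * (1-y) ^ (s-1) ≤ (C * (1-y)) * (1-y) ^ (s-1) := step
          _ = C * ((1-y) ^ s / (1-y) * (1-y)) := by rw [← e1]; ring
          _ = C * (1-y) ^ s := by rw [div_mul_cancel₀ _ h1y.ne']
      · have hc : Filter.Tendsto (fun y : ℝ => (1-y) ^ s) (nhds 1) (nhds 0) := by
          have h2 : Filter.Tendsto (fun y : ℝ => 1 - y) (nhds (1:ℝ)) (nhds 0) := by
            have hcont : Filter.Tendsto (fun y : ℝ => 1 - y) (nhds (1:ℝ)) (nhds (1 - 1)) :=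
              ((continuous_const.sub continuous_id).tendsto (1:ℝ))
            simpa using hcont
          have h3 := (Real.continuousAt_rpow_const 0 s (Or.inr hs0.le)).tendsto.comp h2
          simpa [Real.zero_rpow hs0.ne', Function.comp_def] using h3
        have hc2 : Filter.Tendsto (fun y : ℝ => (1-y) ^ s) (nhdsWithin 1 (Iio 1)) (nhds 0) :=
          hc.mono_left nhdsWithin_le_nhds
        have := hc2.const_mul C
        simpa using this
    have tfac : Filter.Tendsto (fun y : ℝ => y ^ (1-s) / (1-s))
        (nhdsWithin 1 (Iio 1)) (nhds (1 / (1-s))) := by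
      have hc : Filter.Tendsto (fun y : ℝ => y ^ (1-s)) (nhdsWithin 1 (Iio 1))
          (nhds ((1:ℝ) ^ (1-s))) :=
        (Real.continuousAt_rpow_const 1 (1-s) (Or.inl one_ne_zero)).tendsto.mono_left
          nhdsWithin_le_nhds
      have := hc.div_const (1-s)
      simpa [Real.one_rpow] using this
    have := tfac.mul tG
    rw [mul_zero] at this
    apply this.congr
    intro y
    rw [hF]
    ring
  have key := intervalIntegral.integral_eq_sub_of_hasDerivAt_of_tendsto one_pos hderiv hint hT0 hT1
  rw [sub_zero] at key
  -- now split the integral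
  have hInt' : IntervalIntegrable
      (fun y : ℝ => y ^ (-s) * (1 - y ^ r) * (1 - y) ^ (s - 2)) volume 0 1 := by
    rw [intervalIntegrable_iff_integrableOn_Ioc_of_le zero_le_one]; exact hInt
  have hbeta2' : IntervalIntegrable
      (fun y : ℝ => (r/(1-s)) * (y ^ (r-s) * (1-y) ^ (s-1))) volume 0 1 := by
    rw [intervalIntegrable_iff_integrableOn_Ioc_of_le zero_le_one]
    exact hbeta2.const_mul _
  rw [intervalIntegral.integral_sub hInt' hbeta2', sub_eq_zero] at key
  have hIoo : ∫ y in Ioo (0:ℝ) 1, y ^ (-s) * (1 - y ^ r) * (1 - y) ^ (s - 2)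
      = ∫ y in (0:ℝ)..1, y ^ (-s) * (1 - y ^ r) * (1 - y) ^ (s - 2) := by
    rw [intervalIntegral.integral_of_le zero_le_one, integral_Ioc_eq_integral_Ioo]
  rw [hIoo, key, intervalIntegral.integral_const_mul]
  have hval : ∫ y in (0:ℝ)..1, y ^ (r-s) * (1-y) ^ (s-1)
      = Real.Gamma (r+1-s) * Real.Gamma s / Real.Gamma (r+1) := by
    have := realBeta_integral (a := r + 1 - s) (b := s) (by linarith) hs0
    rw [show r + 1 - s + s = r + 1 by ring] at this
    simpa [show (r + 1 - s) - 1 = r - s by ring] using this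
  rw [hval, Beta, show r + 1 - s + s = r + 1 by ring]
  ring
end
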